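/- Fix a permutation w ∈ S_n and i ∈ supp(w). Then i appears exactly once in every reduced word of w if and only if both of the following hold: (1) there is no occurrence of the pattern 321 in w with positions x_1 < x_2 < x_3 satisfying x_1 ≤ i < x_3 and values y_1 < y_2 < y_3 satisfying y_1 ≤ i < y_3; and (2) there is no occurrence of the pattern 3412 in w with positions x_1 < x_2 < x_3 < x_4 satisfying x_2 ≤ i < x_3 and values y_1 < y_2 < y_3 < y_4 satisfying y_2 ≤ i < y_3. -/

import Mathlib

/-- The adjacent transposition `σ_i`, swapping `i` and `i+1` (acting on `ℕ`). -/
def sigmaT (i : ℕ) : Equiv.Perm ℕ := Equiv.swap i (i + 1)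

/-- The permutation given by a word (product of simple reflections, composed as functions). -/
def wordProd (s : List ℕ) : Equiv.Perm ℕ := (s.map sigmaT).prod

/-- `s` is a word for `w` in `S_n`: all letters lie in `{1,…,n-1}` and the product is `w`. -/
def IsWord (n : ℕ) (w : Equiv.Perm ℕ) (s : List ℕ) : Prop :=
  (∀ j ∈ s, 1 ≤ j ∧ j ≤ n - 1) ∧ wordProd s = w

/-- `s` is a reduced word for `w`: a word of minimal length. -/
def IsReducedWord (n : ℕ) (w : Equiv.Perm ℕ) (s : List ℕ) : Prop :=
  IsWord n w s ∧ ∀ t : List ℕ, IsWord n w t → s.length ≤ t.length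

/-- The Coxeter length `ℓ(w)`. -/
noncomputable def ell (n : ℕ) (w : Equiv.Perm ℕ) : ℕ :=
  sInf {k | ∃ s : List ℕ, IsWord n w s ∧ s.length = k}

/-- The support of `w`: letters appearing in reduced words of `w`. -/
def supp (n : ℕ) (w : Equiv.Perm ℕ) : Set ℕ :=
  {i | ∃ s : List ℕ, IsReducedWord n w s ∧ i ∈ s}

/-- Bruhat order: some reduced word of `v` is a subsequence of some reduced word of `w`. -/
def BruhatLE (n : ℕ) (v w : Equiv.Perm ℕ) : Prop :=
  ∃ s t : List ℕ, IsReducedWord n v s ∧ IsReducedWord n w t ∧ s.Sublist t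

/-- The principal order ideal `B(w)`, as a type. -/
def IdealB (n : ℕ) (w : Equiv.Perm ℕ) : Type := {v : Equiv.Perm ℕ // BruhatLE n v w}

/-- The Bruhat order restricted to `B(w)`. -/
def IdealLE (n : ℕ) (w : Equiv.Perm ℕ) (a b : IdealB n w) : Prop := BruhatLE n a.1 b.1

/-- Two relations are isomorphic (order isomorphism of the corresponding ordered sets). -/
def RelIsomorphic {α β : Type*} (ra : α → α → Prop) (rb : β → β → Prop) : Prop :=
  ∃ e : α ≃ β, ∀ a b : α, ra a b ↔ rb (e a) (e b)

/-- `w` is a prism: `B(w) ≅ C₂ × X` for some partially ordered set `X`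
(the two-element chain `C₂` realized as `Bool`), with the componentwise order. -/
def IsPrism (n : ℕ) (w : Equiv.Perm ℕ) : Prop :=
  ∃ (X : Type) (rX : X → X → Prop), IsPartialOrder X rX ∧
    RelIsomorphic (IdealLE n w)
      (fun p q : Bool × X => (p.1 ≤ q.1) ∧ rX p.2 q.2)

/-- `w` belongs to `S_n`: it fixes every point outside `{1,…,n}`. -/
def MemSymm (n : ℕ) (w : Equiv.Perm ℕ) : Prop :=
  ∀ x : ℕ, x ∉ Set.Icc 1 n → w x = x

/-- `i` is unconfined in the word `s`: it appears exactly once, not between two copies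
of `i+1` and not between two copies of `i-1`. -/
def Unconfined (i : ℕ) (s : List ℕ) : Prop :=
  s.count i = 1 ∧ ∀ a b : List ℕ, s = a ++ i :: b →
    ¬((i + 1) ∈ a ∧ (i + 1) ∈ b) ∧ ¬((i - 1) ∈ a ∧ (i - 1) ∈ b)

/-- `B(w) ≅ C₂ × B(v)` with the componentwise order. -/
def IsoC2TimesIdeal (n : ℕ) (w v : Equiv.Perm ℕ) : Prop :=
  RelIsomorphic (IdealLE n w)
    (fun p q : Bool × IdealB n v => (p.1 ≤ q.1) ∧ IdealLE n v p.2 q.2)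

namespace SuppRange

/-- inversion set (by values): pairs x < y with y appearing before x. -/
def invF (n : ℕ) (w : Equiv.Perm ℕ) : Finset (ℕ × ℕ) :=
  (Finset.Icc 1 n ×ˢ Finset.Icc 1 n).filter fun p => p.1 < p.2 ∧ w⁻¹ p.2 < w⁻¹ p.1

variable {n i j : ℕ} {w u v : Equiv.Perm ℕ}

theorem _root_.Equiv.Perm.inv_apply_self {α : Type*} (f : Equiv.Perm α) (x : α) : f⁻¹ (f x) = x :=
  f.symm_apply_apply x

theorem _root_.Equiv.Perm.apply_inv_self {α : Type*} (f : Equiv.Perm α) (x : α) : f (f⁻¹ x) = x :=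
  f.apply_symm_apply x

theorem _root_.Equiv.inv_apply_self {α : Type*} (f : Equiv.Perm α) (x : α) : f⁻¹ (f x) = x :=
  f.symm_apply_apply x

theorem _root_.Equiv.apply_inv_self {α : Type*} (f : Equiv.Perm α) (x : α) : f (f⁻¹ x) = x :=
  f.apply_symm_apply x

lemma mem_invF {x y : ℕ} :
    (x, y) ∈ invF n w ↔ (1 ≤ x ∧ x ≤ n) ∧ (1 ≤ y ∧ y ≤ n) ∧ x < y ∧ w⁻¹ y < w⁻¹ x := by
  simp [invF, Finset.mem_filter, Finset.mem_product, Finset.mem_Icc, and_assoc]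

lemma sigmaT_inv (j : ℕ) : (sigmaT j)⁻¹ = sigmaT j := by
  simp [sigmaT]

lemma sigmaT_mul_self (j : ℕ) : sigmaT j * sigmaT j = 1 := by
  simp [sigmaT]

lemma wordProd_nil : wordProd [] = 1 := rfl

lemma wordProd_cons (j : ℕ) (s : List ℕ) : wordProd (j :: s) = sigmaT j * wordProd s := by
  simp [wordProd]

lemma wordProd_append (s t : List ℕ) : wordProd (s ++ t) = wordProd s * wordProd t := by
  simp [wordProd]

lemma ms_one : MemSymm n 1 := fun _ _ => rfl

lemma ms_sigmaT (h1 : 1 ≤ j) (h2 : j + 1 ≤ n) : MemSymm n (sigmaT j) := by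
  intro x hx
  simp only [Set.mem_Icc, not_and_or, not_le] at hx
  apply Equiv.swap_apply_of_ne_of_ne <;> omega

lemma ms_mul (hu : MemSymm n u) (hv : MemSymm n v) : MemSymm n (u * v) := by
  intro x hx
  simp only [Equiv.Perm.mul_apply, hv x hx, hu x hx]

lemma ms_inv (hu : MemSymm n u) : MemSymm n u⁻¹ := by
  intro x hx
  have h := hu x hx
  conv_lhs => rw [← h]
  exact u.inv_apply_self x

lemma ms_apply_mem (hu : MemSymm n u) {x : ℕ} (hx : 1 ≤ x ∧ x ≤ n) : 1 ≤ u x ∧ u x ≤ n := by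
  by_contra h
  have h0 : u x ∉ Set.Icc 1 n := by
    simp only [Set.mem_Icc]; tauto
  have h1 := hu (u x) h0
  have hx2 : u x = x := u.injective h1
  rw [hx2] at h0
  exact h0 (by simp only [Set.mem_Icc]; exact hx)

lemma ms_inv_mem (hu : MemSymm n u) {x : ℕ} (hx : 1 ≤ x ∧ x ≤ n) : 1 ≤ u⁻¹ x ∧ u⁻¹ x ≤ n :=
  ms_apply_mem (ms_inv hu) hx

lemma ms_fix (hu : MemSymm n u) {x : ℕ} (hx : ¬(1 ≤ x ∧ x ≤ n)) : u x = x := by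
  apply hu; simp only [Set.mem_Icc]; exact hx

lemma ms_wordProd {s : List ℕ} (hs : ∀ j ∈ s, 1 ≤ j ∧ j ≤ n - 1) : MemSymm n (wordProd s) := by
  induction s with
  | nil => exact ms_one
  | cons j t ih =>
    rw [wordProd_cons]
    have hj := hs j (List.mem_cons_self (a := j) (l := t))
    exact ms_mul (ms_sigmaT hj.1 (by omega)) (ih fun m hm => hs m (List.mem_cons_of_mem j hm))

lemma invF_one : invF n 1 = ∅ := by
  ext ⟨x, y⟩
  simp only [mem_invF, Finset.notMem_empty, iff_false]
  rintro ⟨_, _, h1, h2⟩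
  simp only [inv_one, Equiv.Perm.one_apply] at h2
  omega

lemma swap_lt_iff {j p q : ℕ} :
    Equiv.swap j (j+1) q < Equiv.swap j (j+1) p ↔
      (p = j ∧ q = j + 1) ∨ (¬(p = j + 1 ∧ q = j) ∧ q < p) := by
  rw [Equiv.swap_apply_def, Equiv.swap_apply_def]
  split_ifs <;> omega

lemma invF_mul_sigmaT (hu : MemSymm n u) (hj1 : 1 ≤ j) (hj2 : j + 1 ≤ n)
    (hasc : u j < u (j + 1)) :
    invF n (u * sigmaT j) = insert (u j, u (j + 1)) (invF n u) ∧
      (u j, u (j + 1)) ∉ invF n u := by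
  have hja : 1 ≤ u j ∧ u j ≤ n := ms_apply_mem hu ⟨hj1, by omega⟩
  have hjb : 1 ≤ u (j+1) ∧ u (j+1) ≤ n := ms_apply_mem hu ⟨by omega, hj2⟩
  have hinv : ∀ z, (u * sigmaT j)⁻¹ z = Equiv.swap j (j+1) (u⁻¹ z) := by
    intro z
    simp [sigmaT, mul_inv_rev, Equiv.Perm.mul_apply]
  have e1 : ∀ z m, u⁻¹ z = m → z = u m := by
    intro z m h; rw [← h, u.apply_inv_self]
  constructor
  · ext ⟨x, y⟩
    simp only [Finset.mem_insert, mem_invF, hinv, Prod.mk.injEq, swap_lt_iff]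
    constructor
    · rintro ⟨hx, hy, hxy, (⟨hp, hq⟩ | ⟨-, hlt⟩)⟩
      · exact Or.inl ⟨e1 _ _ hp, e1 _ _ hq⟩
      · exact Or.inr ⟨hx, hy, hxy, hlt⟩
    · rintro (⟨rfl, rfl⟩ | ⟨hx, hy, hxy, hlt⟩)
      · exact ⟨hja, hjb, hasc, Or.inl ⟨u.inv_apply_self j, u.inv_apply_self (j+1)⟩⟩
      · refine ⟨hx, hy, hxy, Or.inr ⟨?_, hlt⟩⟩
        rintro ⟨hp, hq⟩
        have hx' := e1 _ _ hp
        have hy' := e1 _ _ hq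
        omega
  · simp only [mem_invF, not_and_or]
    right; right; right
    simp only [u.inv_apply_self, not_lt]
    omega

lemma invF_mul_sigmaT_desc (hu : MemSymm n u) (hj1 : 1 ≤ j) (hj2 : j + 1 ≤ n)
    (hdesc : u (j + 1) < u j) :
    invF n u = insert (u (j + 1), u j) (invF n (u * sigmaT j)) ∧
      (u (j + 1), u j) ∉ invF n (u * sigmaT j) := by
  have hu' : MemSymm n (u * sigmaT j) := ms_mul hu (ms_sigmaT hj1 hj2)
  have h1 : (u * sigmaT j) j = u (j + 1) := by
    simp [sigmaT, Equiv.Perm.mul_apply]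
  have h2 : (u * sigmaT j) (j + 1) = u j := by
    simp [sigmaT, Equiv.Perm.mul_apply]
  have h3 : (u * sigmaT j) * sigmaT j = u := by
    rw [mul_assoc, sigmaT_mul_self, mul_one]
  have := invF_mul_sigmaT hu' hj1 hj2 (by rw [h1, h2]; exact hdesc)
  rw [h1, h2, h3] at this
  exact this


lemma card_invF_mul_le (hu : MemSymm n u) (hj1 : 1 ≤ j) (hj2 : j + 1 ≤ n) :
    (invF n (u * sigmaT j)).card ≤ (invF n u).card + 1 ∧
      (invF n u).card ≤ (invF n (u * sigmaT j)).card + 1 := by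
  rcases lt_trichotomy (u j) (u (j + 1)) with h | h | h
  · obtain ⟨heq, hnm⟩ := invF_mul_sigmaT hu hj1 hj2 h
    rw [heq, Finset.card_insert_of_notMem hnm]
    omega
  · exact absurd (u.injective h) (by omega)
  · obtain ⟨heq, hnm⟩ := invF_mul_sigmaT_desc hu hj1 hj2 h
    rw [heq, Finset.card_insert_of_notMem hnm]
    omega

lemma card_invF_wordProd_le {s : List ℕ} (hs : ∀ j ∈ s, 1 ≤ j ∧ j ≤ n - 1) :
    ∀ u : Equiv.Perm ℕ, MemSymm n u →
      (invF n (u * wordProd s)).card ≤ (invF n u).card + s.length := by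
  induction s with
  | nil => intro u _; simp [wordProd_nil]
  | cons j t ih =>
    intro u hu
    have hj := hs j (List.mem_cons_self (a := j) (l := t))
    have hj2 : j + 1 ≤ n := by omega
    have hre : u * wordProd (j :: t) = (u * sigmaT j) * wordProd t := by
      rw [wordProd_cons, mul_assoc]
    rw [hre]
    have h1 := ih (fun m hm => hs m (List.mem_cons_of_mem j hm)) (u * sigmaT j)
      (ms_mul hu (ms_sigmaT hj.1 hj2))
    have h2 := (card_invF_mul_le hu hj.1 hj2).1
    simp only [List.length_cons]
    omega

lemma grow_subset {s : List ℕ} (hs : ∀ j ∈ s, 1 ≤ j ∧ j ≤ n - 1) :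
    ∀ u : Equiv.Perm ℕ, MemSymm n u →
      (invF n (u * wordProd s)).card = (invF n u).card + s.length →
      invF n u ⊆ invF n (u * wordProd s) := by
  induction s with
  | nil => intro u _ _; simp [wordProd_nil]
  | cons j t ih =>
    intro u hu hcard
    have hj := hs j (List.mem_cons_self (a := j) (l := t))
    have hj2 : j + 1 ≤ n := by omega
    have hu' : MemSymm n (u * sigmaT j) := ms_mul hu (ms_sigmaT hj.1 hj2)
    have hre : u * wordProd (j :: t) = (u * sigmaT j) * wordProd t := by
      rw [wordProd_cons, mul_assoc]
    rw [hre] at hcard ⊢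
    have hle := card_invF_wordProd_le (fun m hm => hs m (List.mem_cons_of_mem j hm))
      (u * sigmaT j) hu'
    simp only [List.length_cons] at hcard
    rcases lt_trichotomy (u j) (u (j + 1)) with h | h | h
    · obtain ⟨heq, hnm⟩ := invF_mul_sigmaT hu hj.1 hj2 h
      have hc1 : (invF n (u * sigmaT j)).card = (invF n u).card + 1 := by
        rw [heq, Finset.card_insert_of_notMem hnm]
      refine Finset.Subset.trans ?_ (ih (fun m hm => hs m (List.mem_cons_of_mem j hm))
        (u * sigmaT j) hu' (by omega))
      rw [heq]; exact Finset.subset_insert _ _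
    · exact absurd (u.injective h) (by omega)
    · obtain ⟨heq, hnm⟩ := invF_mul_sigmaT_desc hu hj.1 hj2 h
      have hc1 : (invF n u).card = (invF n (u * sigmaT j)).card + 1 := by
        rw [heq, Finset.card_insert_of_notMem hnm]
      omega

/-- Key structural lemma about a position in a reduced word. -/
lemma reduced_split {s p r : List ℕ}
    (hletters : ∀ m ∈ s, 1 ≤ m ∧ m ≤ n - 1) (hprod : wordProd s = w)
    (hlen : s.length = (invF n w).card) (hdec : s = p ++ j :: r) :
    (wordProd p) j < (wordProd p) (j + 1) ∧
    invF n (wordProd p * sigmaT j)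
      = insert ((wordProd p) j, (wordProd p) (j + 1)) (invF n (wordProd p)) ∧
    invF n (wordProd p * sigmaT j) ⊆ invF n w ∧
    (invF n (wordProd p)).card = p.length := by
  subst hdec
  have hlp : ∀ m ∈ p, 1 ≤ m ∧ m ≤ n - 1 := fun m hm => hletters m (by simp [hm])
  have hlr : ∀ m ∈ r, 1 ≤ m ∧ m ≤ n - 1 := fun m hm => hletters m (by simp [hm])
  have hjb : 1 ≤ j ∧ j ≤ n - 1 := hletters j (by simp)
  have hj2 : j + 1 ≤ n := by omega
  set u := wordProd p with hudef
  have hu : MemSymm n u := ms_wordProd hlp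
  have hu' : MemSymm n (u * sigmaT j) := ms_mul hu (ms_sigmaT hjb.1 hj2)
  have hwprod : (u * sigmaT j) * wordProd r = w := by
    rw [← hprod, wordProd_append, wordProd_cons, mul_assoc]
  have h1 : (invF n u).card ≤ p.length := by
    have := card_invF_wordProd_le hlp 1 ms_one
    simpa [invF_one] using this
  have h2 : (invF n w).card ≤ (invF n (u * sigmaT j)).card + r.length := by
    rw [← hwprod]
    exact card_invF_wordProd_le hlr _ hu'
  have hlens : (p ++ j :: r).length = p.length + 1 + r.length := by
    simp; omega
  rcases lt_trichotomy (u j) (u (j + 1)) with h | h | h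
  · obtain ⟨heq, hnm⟩ := invF_mul_sigmaT hu hjb.1 hj2 h
    have hc1 : (invF n (u * sigmaT j)).card = (invF n u).card + 1 := by
      rw [heq, Finset.card_insert_of_notMem hnm]
    have hcu : (invF n u).card = p.length := by omega
    have hcw : (invF n w).card = (invF n (u * sigmaT j)).card + r.length := by omega
    refine ⟨h, heq, ?_, hcu⟩
    have := grow_subset hlr (u * sigmaT j) hu' (by rw [hwprod]; omega)
    rw [hwprod] at this
    exact this
  · exact absurd (u.injective h) (by omega)
  · obtain ⟨heq, hnm⟩ := invF_mul_sigmaT_desc hu hjb.1 hj2 h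
    have hc1 : (invF n u).card = (invF n (u * sigmaT j)).card + 1 := by
      rw [heq, Finset.card_insert_of_notMem hnm]
    omega

lemma rank_eq (hu : MemSymm n u) {x : ℕ} (hx : 1 ≤ x ∧ x ≤ n) :
    ((Finset.Icc 1 n).filter fun y => u⁻¹ y ≤ u⁻¹ x).card = u⁻¹ x := by
  have hxi := ms_inv_mem hu hx
  have himg : ((Finset.Icc 1 n).filter fun y => u⁻¹ y ≤ u⁻¹ x)
      = (Finset.Icc 1 (u⁻¹ x)).image u := by
    ext z
    simp only [Finset.mem_filter, Finset.mem_image, Finset.mem_Icc]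
    constructor
    · rintro ⟨⟨hz1, hz2⟩, hz3⟩
      refine ⟨u⁻¹ z, ⟨?_, hz3⟩, u.apply_inv_self z⟩
      by_contra h
      have h0 : u⁻¹ z = 0 := by omega
      have : z = u 0 := by rw [← h0, u.apply_inv_self]
      have : u 0 = 0 := ms_fix hu (by omega)
      omega
    · rintro ⟨t, ⟨ht1, ht2⟩, rfl⟩
      have htn : 1 ≤ t ∧ t ≤ n := ⟨ht1, le_trans ht2 hxi.2⟩
      refine ⟨ms_apply_mem hu htn, ?_⟩
      rw [u.inv_apply_self]; exact ht2
  rw [himg, Finset.card_image_of_injective _ u.injective, Nat.card_Icc]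
  omega

lemma invF_ext (hu : MemSymm n u) (hw : MemSymm n w) (h : invF n u = invF n w) : u = w := by
  have horder : ∀ x y : ℕ, 1 ≤ x → x ≤ n → 1 ≤ y → y ≤ n →
      (u⁻¹ y < u⁻¹ x ↔ w⁻¹ y < w⁻¹ x) := by
    intro x y hx1 hx2 hy1 hy2
    rcases lt_trichotomy x y with hxy | hxy | hxy
    · have := mem_invF (n := n) (w := u) (x := x) (y := y)
      have h2 := mem_invF (n := n) (w := w) (x := x) (y := y)
      constructor
      · intro hh
        have : (x, y) ∈ invF n u := mem_invF.mpr ⟨⟨hx1, hx2⟩, ⟨hy1, hy2⟩, hxy, hh⟩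
        rw [h] at this
        exact (mem_invF.mp this).2.2.2
      · intro hh
        have : (x, y) ∈ invF n w := mem_invF.mpr ⟨⟨hx1, hx2⟩, ⟨hy1, hy2⟩, hxy, hh⟩
        rw [← h] at this
        exact (mem_invF.mp this).2.2.2
    · subst hxy; omega
    · have hne1 : u⁻¹ x ≠ u⁻¹ y := fun hh => by
        have := u⁻¹.injective hh; omega
      have hne2 : w⁻¹ x ≠ w⁻¹ y := fun hh => by
        have := w⁻¹.injective hh; omega
      constructor
      · intro hh
        by_contra hcon
        have hwlt : w⁻¹ x < w⁻¹ y := by omega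
        have : (y, x) ∈ invF n w := mem_invF.mpr ⟨⟨hy1, hy2⟩, ⟨hx1, hx2⟩, hxy, hwlt⟩
        rw [← h] at this
        have := (mem_invF.mp this).2.2.2
        omega
      · intro hh
        by_contra hcon
        have hult : u⁻¹ x < u⁻¹ y := by omega
        have : (y, x) ∈ invF n u := mem_invF.mpr ⟨⟨hy1, hy2⟩, ⟨hx1, hx2⟩, hxy, hult⟩
        rw [h] at this
        have := (mem_invF.mp this).2.2.2
        omega
  have hinveq : ∀ z : ℕ, u⁻¹ z = w⁻¹ z := by
    intro z
    by_cases hz : 1 ≤ z ∧ z ≤ n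
    · have hfil : ((Finset.Icc 1 n).filter fun y => u⁻¹ y ≤ u⁻¹ z)
          = ((Finset.Icc 1 n).filter fun y => w⁻¹ y ≤ w⁻¹ z) := by
        apply Finset.filter_congr
        intro y hy
        simp only [Finset.mem_Icc] at hy
        by_cases hyz : y = z
        · subst hyz; simp
        · have h1 := horder y z hy.1 hy.2 hz.1 hz.2
          have hne1 : u⁻¹ y ≠ u⁻¹ z := fun hh => hyz (u⁻¹.injective hh)
          have hne2 : w⁻¹ y ≠ w⁻¹ z := fun hh => hyz (w⁻¹.injective hh)
          have h2 := horder z y hz.1 hz.2 hy.1 hy.2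
          omega
      have r1 := rank_eq hu hz
      have r2 := rank_eq hw hz
      rw [← r1, ← r2, hfil]
    · rw [ms_fix (ms_inv hu) hz, ms_fix (ms_inv hw) hz]
  have : u⁻¹ = w⁻¹ := Equiv.ext hinveq
  calc u = (u⁻¹)⁻¹ := by simp
  _ = (w⁻¹)⁻¹ := by rw [this]
  _ = w := by simp

lemma gap_lemma (hu : MemSymm n u) (hw : MemSymm n w) (hsub : invF n u ⊆ invF n w)
    (hne : u ≠ w) :
    ∃ j, 1 ≤ j ∧ j + 1 ≤ n ∧ u j < u (j + 1) ∧ (u j, u (j + 1)) ∈ invF n w := by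
  have hD : (invF n w \ invF n u).Nonempty := by
    rw [Finset.sdiff_nonempty]
    intro hcon
    exact hne (invF_ext hu hw (Finset.Subset.antisymm hsub hcon))
  obtain ⟨pr, hpr, hmin⟩ := Finset.exists_min_image (invF n w \ invF n u)
    (fun pr => u⁻¹ pr.2 - u⁻¹ pr.1) hD
  obtain ⟨x, y⟩ := pr
  rw [Finset.mem_sdiff] at hpr
  obtain ⟨hxw, hxu⟩ := hpr
  obtain ⟨hxb, hyb, hxy, hwlt⟩ := mem_invF.mp hxw
  have hpq : u⁻¹ x < u⁻¹ y := by
    have h1 : ¬ (u⁻¹ y < u⁻¹ x) := fun hh => hxu (mem_invF.mpr ⟨hxb, hyb, hxy, hh⟩)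
    have h2 : u⁻¹ x ≠ u⁻¹ y := fun hh => by have := u⁻¹.injective hh; omega
    omega
  have hq := ms_inv_mem hu hyb
  have hp := ms_inv_mem hu hxb
  -- claim : gap is 1
  have hgap : u⁻¹ y = u⁻¹ x + 1 := by
    by_contra hcon
    set z := u (u⁻¹ x + 1) with hzdef
    have hz1 : u⁻¹ z = u⁻¹ x + 1 := by rw [hzdef, u.inv_apply_self]
    have hzb : 1 ≤ z ∧ z ≤ n := ms_apply_mem hu ⟨by omega, by omega⟩
    have hzx : z ≠ x := fun hh => by rw [hh] at hz1; omega
    have hzy : z ≠ y := fun hh => by rw [hh] at hz1; omega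
    rcases lt_trichotomy z x with hc | hc | hc
    · -- z < x
      have hzxI : (z, x) ∈ invF n u := mem_invF.mpr ⟨hzb, hxb, hc, by omega⟩
      have := (mem_invF.mp (hsub hzxI)).2.2.2
      have hnew : (z, y) ∈ invF n w \ invF n u := by
        rw [Finset.mem_sdiff]
        constructor
        · exact mem_invF.mpr ⟨hzb, hyb, by omega, by omega⟩
        · intro hh
          have := (mem_invF.mp hh).2.2.2
          omega
      have h5 : u⁻¹ y - u⁻¹ x ≤ u⁻¹ y - u⁻¹ z := hmin (z, y) hnew
      omega
    · exact absurd hc hzx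
    · rcases lt_trichotomy z y with hd | hd | hd
      · by_cases he : w⁻¹ z < w⁻¹ x
        · have hnew : (x, z) ∈ invF n w \ invF n u := by
            rw [Finset.mem_sdiff]
            constructor
            · exact mem_invF.mpr ⟨hxb, hzb, hc, he⟩
            · intro hh
              have := (mem_invF.mp hh).2.2.2
              omega
          have h5 : u⁻¹ y - u⁻¹ x ≤ u⁻¹ z - u⁻¹ x := hmin (x, z) hnew
          omega
        · have hne : w⁻¹ z ≠ w⁻¹ x := fun hh => hzx (w⁻¹.injective hh)
          have hnew : (z, y) ∈ invF n w \ invF n u := by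
            rw [Finset.mem_sdiff]
            constructor
            · exact mem_invF.mpr ⟨hzb, hyb, hd, by omega⟩
            · intro hh
              have := (mem_invF.mp hh).2.2.2
              omega
          have h5 : u⁻¹ y - u⁻¹ x ≤ u⁻¹ y - u⁻¹ z := hmin (z, y) hnew
          omega
      · exact absurd hd hzy
      · have hyzI : (y, z) ∈ invF n u := mem_invF.mpr ⟨hyb, hzb, hd, by omega⟩
        have := (mem_invF.mp (hsub hyzI)).2.2.2
        have hnew : (x, z) ∈ invF n w \ invF n u := by
          rw [Finset.mem_sdiff]
          constructor
          · exact mem_invF.mpr ⟨hxb, hzb, by omega, by omega⟩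
          · intro hh
            have := (mem_invF.mp hh).2.2.2
            omega
        have h5 : u⁻¹ y - u⁻¹ x ≤ u⁻¹ z - u⁻¹ x := hmin (x, z) hnew
        omega
  refine ⟨u⁻¹ x, hp.1, by omega, ?_, ?_⟩
  · rw [u.apply_inv_self, ← hgap, u.apply_inv_self]
    omega
  · rw [u.apply_inv_self, ← hgap, u.apply_inv_self]
    exact hxw

lemma chain_word (hu : MemSymm n u) (hw : MemSymm n w) (hsub : invF n u ⊆ invF n w) :
    ∃ s : List ℕ, (∀ j ∈ s, 1 ≤ j ∧ j ≤ n - 1) ∧ u * wordProd s = w ∧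
      s.length + (invF n u).card = (invF n w).card := by
  have key : ∀ k : ℕ, ∀ u : Equiv.Perm ℕ, MemSymm n u → invF n u ⊆ invF n w →
      (invF n w).card = (invF n u).card + k →
      ∃ s : List ℕ, (∀ j ∈ s, 1 ≤ j ∧ j ≤ n - 1) ∧ u * wordProd s = w ∧
        s.length + (invF n u).card = (invF n w).card := by
    intro k
    induction k with
    | zero =>
      intro u hu hsub hcard
      have : invF n u = invF n w :=
        Finset.eq_of_subset_of_card_le hsub (by omega)
      have := invF_ext hu hw this
      subst this
      exact ⟨[], by simp, by rw [wordProd_nil, mul_one], by simp⟩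
    | succ k ih =>
      intro u hu hsub hcard
      have hne : u ≠ w := by
        intro hh; subst hh; omega
      obtain ⟨j, hj1, hj2, hasc, hmemw⟩ := gap_lemma hu hw hsub hne
      obtain ⟨heq, hnm⟩ := invF_mul_sigmaT hu hj1 hj2 hasc
      have hu' : MemSymm n (u * sigmaT j) := ms_mul hu (ms_sigmaT hj1 hj2)
      have hsub' : invF n (u * sigmaT j) ⊆ invF n w := by
        rw [heq]
        exact Finset.insert_subset hmemw hsub
      have hc1 : (invF n (u * sigmaT j)).card = (invF n u).card + 1 := by
        rw [heq, Finset.card_insert_of_notMem hnm]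
      obtain ⟨s, hs1, hs2, hs3⟩ := ih (u * sigmaT j) hu' hsub' (by omega)
      refine ⟨j :: s, ?_, ?_, ?_⟩
      · intro m hm
        rcases List.mem_cons.mp hm with rfl | hm
        · exact ⟨hj1, by omega⟩
        · exact hs1 m hm
      · rw [wordProd_cons, ← mul_assoc]
        exact hs2
      · simp only [List.length_cons]
        omega
  have hcle : (invF n u).card ≤ (invF n w).card := Finset.card_le_card hsub
  exact key ((invF n w).card - (invF n u).card) u hu hsub (by omega)

lemma wordProd_singleton (j : ℕ) : wordProd [j] = sigmaT j := by
  simp [wordProd]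

/-- rank function strict monotonicity -/
lemma rank_lt_rank (n : ℕ) (key : ℕ → ℕ) {x y : ℕ}
    (hy : 1 ≤ y ∧ y ≤ n) (hk : key x < key y) :
    ((Finset.Icc 1 n).filter fun z => key z ≤ key x).card
      < ((Finset.Icc 1 n).filter fun z => key z ≤ key y).card := by
  apply Finset.card_lt_card
  rw [Finset.ssubset_iff_of_subset]
  · refine ⟨y, ?_, ?_⟩
    · simp only [Finset.mem_filter, Finset.mem_Icc]
      exact ⟨hy, le_refl _⟩
    · simp only [Finset.mem_filter, Finset.mem_Icc]
      rintro ⟨-, hc⟩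
      omega
  · intro z hz
    simp only [Finset.mem_filter] at hz ⊢
    exact ⟨hz.1, by omega⟩

lemma exists_sortPerm (n : ℕ) (key : ℕ → ℕ)
    (hinj : ∀ x, 1 ≤ x → x ≤ n → ∀ y, 1 ≤ y → y ≤ n → key x = key y → x = y) :
    ∃ u : Equiv.Perm ℕ, MemSymm n u ∧
      ∀ x, u⁻¹ x = if 1 ≤ x ∧ x ≤ n
        then ((Finset.Icc 1 n).filter fun y => key y ≤ key x).card else x := by
  classical
  set f : ℕ → ℕ := fun x => if 1 ≤ x ∧ x ≤ n
    then ((Finset.Icc 1 n).filter fun y => key y ≤ key x).card else x with hfdef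
  have hfpos : ∀ x, (1 ≤ x ∧ x ≤ n) →
      f x = ((Finset.Icc 1 n).filter fun y => key y ≤ key x).card := by
    intro x hx; simp only [hfdef, if_pos hx]
  have hfout : ∀ x, ¬(1 ≤ x ∧ x ≤ n) → f x = x := by
    intro x hx; simp only [hfdef, if_neg hx]
  have hfin : ∀ x, (1 ≤ x ∧ x ≤ n) → 1 ≤ f x ∧ f x ≤ n := by
    intro x hx
    rw [hfpos x hx]
    constructor
    · rw [Nat.one_le_iff_ne_zero, ← Nat.pos_iff_ne_zero, Finset.card_pos]
      exact ⟨x, by simp only [Finset.mem_filter, Finset.mem_Icc]; exact ⟨hx, le_refl _⟩⟩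
    · calc ((Finset.Icc 1 n).filter fun y => key y ≤ key x).card
          ≤ (Finset.Icc 1 n).card := Finset.card_filter_le _ _
      _ = n := by rw [Nat.card_Icc]; omega
  have hfinj : Function.Injective f := by
    intro a b hab
    by_cases ha : 1 ≤ a ∧ a ≤ n <;> by_cases hb : 1 ≤ b ∧ b ≤ n
    · by_contra hne
      have hkne : key a ≠ key b := fun h => hne (hinj a ha.1 ha.2 b hb.1 hb.2 h)
      rcases lt_or_gt_of_ne hkne with h | h
      · have := rank_lt_rank n key hb h
        rw [← hfpos a ha, ← hfpos b hb] at this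
        omega
      · have := rank_lt_rank n key ha h
        rw [← hfpos a ha, ← hfpos b hb] at this
        omega
    · exfalso; rw [hfout b hb] at hab
      have := hfin a ha; rw [hab] at this; exact hb this
    · exfalso; rw [hfout a ha] at hab
      have := hfin b hb; rw [← hab] at this; exact ha this
    · rw [hfout a ha, hfout b hb] at hab; exact hab
  have hfsurj : Function.Surjective f := by
    intro z
    by_cases hz : 1 ≤ z ∧ z ≤ n
    · have himg : (Finset.Icc 1 n).image f = Finset.Icc 1 n := by
        apply Finset.eq_of_subset_of_card_le
        · intro m hm
          obtain ⟨t, ht, rfl⟩ := Finset.mem_image.mp hm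
          simp only [Finset.mem_Icc] at ht ⊢
          exact hfin t ht
        · rw [Finset.card_image_of_injective _ hfinj]
      have : z ∈ (Finset.Icc 1 n).image f := by
        rw [himg]; simp only [Finset.mem_Icc]; exact hz
      obtain ⟨t, _, ht⟩ := Finset.mem_image.mp this
      exact ⟨t, ht⟩
    · exact ⟨z, hfout z hz⟩
  set e : Equiv.Perm ℕ := Equiv.ofBijective f ⟨hfinj, hfsurj⟩ with hedef
  have he : ∀ x, e x = f x := fun x => rfl
  refine ⟨e.symm, ?_, ?_⟩
  · intro x hx
    simp only [Set.mem_Icc] at hx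
    apply e.injective
    rw [Equiv.apply_symm_apply, he, hfout x hx]
  · intro x
    have h1 : (e.symm)⁻¹ = e := rfl
    rw [h1, he]

/-- if a word does not use letter `i` then its inverse preserves `{≤ i}`. -/
lemma noI_preserve {s : List ℕ} {i : ℕ} (hs : i ∉ s) :
    ∀ v : ℕ, ((wordProd s)⁻¹ v ≤ i ↔ v ≤ i) := by
  induction s with
  | nil => intro v; simp [wordProd_nil]
  | cons j t ih =>
    intro v
    have hj : j ≠ i := fun h => hs (h ▸ List.mem_cons_self (a := j) (l := t))
    have ht : i ∉ t := fun h => hs (List.mem_cons_of_mem _ h)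
    rw [wordProd_cons, mul_inv_rev, Equiv.Perm.mul_apply, sigmaT_inv]
    rw [ih ht]
    have : (sigmaT j) v = if v = j then j + 1 else if v = j + 1 then j else v := by
      simp [sigmaT, Equiv.swap_apply_def]
    rw [this]
    split_ifs <;> omega

/-- letters `≤ i` whose final position is `> i`. -/
def crossL (w : Equiv.Perm ℕ) (i : ℕ) : Finset ℕ :=
  (Finset.Icc 1 i).filter fun v => i < w⁻¹ v

def crossR (n : ℕ) (w : Equiv.Perm ℕ) (i : ℕ) : Finset ℕ :=
  (Finset.Icc 1 n).filter fun v => i < v ∧ w⁻¹ v ≤ i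

lemma crossL_card_le_count {i : ℕ} (s : List ℕ) :
    (crossL (wordProd s) i).card ≤ s.count i := by
  induction s using List.reverseRecOn with
  | nil =>
    have : crossL (wordProd []) i = ∅ := by
      ext v
      simp [crossL, wordProd_nil, Finset.mem_filter, Finset.mem_Icc]
    simp [this]
  | append_singleton t j ih =>
    rw [wordProd_append, wordProd_singleton]
    set u := wordProd t with hudef
    by_cases hji : j = i
    · subst hji
      have hsub : crossL (u * sigmaT j) j ⊆ insert (u j) (crossL u j) := by
        intro v hv
        simp only [crossL, Finset.mem_filter, Finset.mem_Icc] at hv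
        obtain ⟨hv1, hv2⟩ := hv
        rw [mul_inv_rev, Equiv.Perm.mul_apply, sigmaT_inv] at hv2
        simp only [sigmaT, Equiv.swap_apply_def] at hv2
        simp only [Finset.mem_insert, crossL, Finset.mem_filter, Finset.mem_Icc]
        by_cases h1 : u⁻¹ v = j
        · left
          rw [← h1, u.apply_inv_self]
        · by_cases h2 : u⁻¹ v = j + 1
          · rw [if_neg h1, if_pos h2] at hv2; omega
          · rw [if_neg h1, if_neg h2] at hv2
            right; exact ⟨hv1, hv2⟩
      calc (crossL (u * sigmaT j) j).card ≤ (insert (u j) (crossL u j)).card :=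
            Finset.card_le_card hsub
        _ ≤ (crossL u j).card + 1 := Finset.card_insert_le _ _
        _ ≤ t.count j + 1 := by omega
        _ = (t ++ [j]).count j := by simp
    · have heq : crossL (u * sigmaT j) i = crossL u i := by
        apply Finset.filter_congr
        intro v _
        rw [mul_inv_rev, Equiv.Perm.mul_apply, sigmaT_inv]
        have : (sigmaT j) (u⁻¹ v) = if u⁻¹ v = j then j + 1
            else if u⁻¹ v = j + 1 then j else u⁻¹ v := by
          simp [sigmaT, Equiv.swap_apply_def]
        rw [this]
        split_ifs <;> constructor <;> intro <;> omega
      rw [heq]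
      calc (crossL u i).card ≤ t.count i := ih
        _ ≤ (t ++ [j]).count i := by simp [List.count_append]

lemma card_crossL_eq_crossR (hw : MemSymm n w) (hin : i ≤ n) :
    (crossL w i).card = (crossR n w i).card := by
  classical
  have hC : ((Finset.Icc 1 n).filter fun v => w⁻¹ v ≤ i) = (Finset.Icc 1 i).image w := by
    ext z
    simp only [Finset.mem_filter, Finset.mem_Icc, Finset.mem_image]
    constructor
    · rintro ⟨⟨hz1, hz2⟩, hz3⟩
      refine ⟨w⁻¹ z, ⟨?_, hz3⟩, w.apply_inv_self z⟩
      by_contra h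
      have h0 : w⁻¹ z = 0 := by omega
      have h1 : w 0 = 0 := ms_fix hw (by omega)
      have : z = w 0 := by rw [← h0, w.apply_inv_self]
      omega
    · rintro ⟨t, ⟨ht1, ht2⟩, rfl⟩
      refine ⟨ms_apply_mem hw ⟨ht1, le_trans ht2 hin⟩, ?_⟩
      rw [w.inv_apply_self]; exact ht2
  have hCcard : ((Finset.Icc 1 n).filter fun v => w⁻¹ v ≤ i).card = i := by
    rw [hC, Finset.card_image_of_injective _ w.injective, Nat.card_Icc]
    omega
  have hsplit1 : (((Finset.Icc 1 n).filter fun v => w⁻¹ v ≤ i).filter fun v => v ≤ i).card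
      + (((Finset.Icc 1 n).filter fun v => w⁻¹ v ≤ i).filter fun v => ¬ v ≤ i).card = i := by
    rw [Finset.card_filter_add_card_filter_not]
    exact hCcard
  have hA : ((Finset.Icc 1 n).filter fun v => w⁻¹ v ≤ i).filter (fun v => v ≤ i)
      = (Finset.Icc 1 i).filter fun v => w⁻¹ v ≤ i := by
    ext v
    simp only [Finset.mem_filter, Finset.mem_Icc]
    constructor
    · rintro ⟨⟨⟨h1, _⟩, h3⟩, h4⟩; exact ⟨⟨h1, h4⟩, h3⟩
    · rintro ⟨⟨h1, h2⟩, h3⟩; exact ⟨⟨⟨h1, by omega⟩, h3⟩, h2⟩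
  have hB : ((Finset.Icc 1 n).filter fun v => w⁻¹ v ≤ i).filter (fun v => ¬ v ≤ i)
      = crossR n w i := by
    ext v
    simp only [Finset.mem_filter, Finset.mem_Icc, crossR]
    constructor
    · rintro ⟨⟨h1, h3⟩, h4⟩; exact ⟨h1, by omega, h3⟩
    · rintro ⟨h1, h2, h3⟩; exact ⟨⟨h1, h3⟩, by omega⟩
  have hsplit2 : ((Finset.Icc 1 i).filter fun v => w⁻¹ v ≤ i).card
      + ((Finset.Icc 1 i).filter fun v => ¬ w⁻¹ v ≤ i).card = i := by
    rw [Finset.card_filter_add_card_filter_not, Nat.card_Icc]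
    omega
  have hL : ((Finset.Icc 1 i).filter fun v => ¬ w⁻¹ v ≤ i) = crossL w i := by
    ext v
    simp only [Finset.mem_filter, crossL]
    constructor
    · rintro ⟨h1, h2⟩; exact ⟨h1, by omega⟩
    · rintro ⟨h1, h2⟩; exact ⟨h1, by omega⟩
  rw [hA] at hsplit1
  rw [hB] at hsplit1
  rw [hL] at hsplit2
  omega

/-- canonical straddling-321 witness, letter form -/
def CW (w : Equiv.Perm ℕ) (i α q β : ℕ) : Prop :=
  α ≤ i ∧ i < β ∧ α < q ∧ q < β ∧
  w⁻¹ β ≤ i ∧ i < w⁻¹ α ∧ w⁻¹ β < w⁻¹ q ∧ w⁻¹ q < w⁻¹ α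

lemma exists_first_split {a : ℕ} {l : List ℕ} (h : a ∈ l) :
    ∃ p r, l = p ++ a :: r ∧ a ∉ p := by
  induction l with
  | nil => cases h
  | cons b t ih =>
    by_cases hb : b = a
    · exact ⟨[], t, by simp [hb], List.not_mem_nil (a := a)⟩
    · have ht : a ∈ t := by
        rcases List.mem_cons.mp h with h | h
        · exact absurd h.symm hb
        · exact h
      obtain ⟨p, r, rfl, hp⟩ := ih ht
      refine ⟨b :: p, r, rfl, ?_⟩
      simp only [List.mem_cons, not_or]
      exact ⟨fun h => hb h.symm, hp⟩

lemma lemA {s p p' r : List ℕ}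
    (hletters : ∀ m ∈ s, 1 ≤ m ∧ m ≤ n - 1) (hprod : wordProd s = w)
    (hlen : s.length = (invF n w).card)
    (hdec : s = p ++ i :: (p' ++ i :: r)) (hp : i ∉ p) (hp' : i ∉ p')
    (hi1 : 1 ≤ i) (hi2 : i + 1 ≤ n)
    (huL : ∀ x x', x ≤ i → i < w⁻¹ x → x' ≤ i → i < w⁻¹ x' → x = x')
    (huR : ∀ y y', i < y → w⁻¹ y ≤ i → i < y' → w⁻¹ y' ≤ i → y = y')
    (hexR : ∀ x, x ≤ i → i < w⁻¹ x → ∃ y, i < y ∧ w⁻¹ y ≤ i)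
    (hexL : ∀ y, i < y → w⁻¹ y ≤ i → ∃ x, x ≤ i ∧ i < w⁻¹ x)
    (hnw : ¬ ∃ α q β, CW w i α q β) : False := by
  have hlp : ∀ m ∈ p, 1 ≤ m ∧ m ≤ n - 1 := fun m hm => hletters m (by rw [hdec]; simp [hm])
  have hlp2 : ∀ m ∈ p ++ i :: p', 1 ≤ m ∧ m ≤ n - 1 := by
    intro m hm
    apply hletters m
    rw [hdec]
    simp only [List.mem_append, List.mem_cons] at hm ⊢
    tauto
  obtain ⟨hab, hins1, hsub1, -⟩ := reduced_split hletters hprod hlen hdec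
  have hdec2 : s = (p ++ i :: p') ++ i :: r := by rw [hdec]; simp
  obtain ⟨hce, hins2, hsub2, -⟩ := reduced_split hletters hprod hlen hdec2
  set u := wordProd p with hudef
  set v := wordProd (p ++ i :: p') with hvdef
  set a := u i with hadef
  set b := u (i + 1) with hbdef
  set c := v i with hcdef
  set e := v (i + 1) with hedef
  have hu : MemSymm n u := ms_wordProd hlp
  have hv : MemSymm n v := ms_wordProd hlp2
  have hiin : (1 : ℕ) ≤ i ∧ i ≤ n := ⟨hi1, by omega⟩
  have hi1in : (1 : ℕ) ≤ i + 1 ∧ i + 1 ≤ n := ⟨by omega, hi2⟩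
  have hain : 1 ≤ a ∧ a ≤ n := ms_apply_mem hu hiin
  have hbin : 1 ≤ b ∧ b ≤ n := ms_apply_mem hu hi1in
  have hcin : 1 ≤ c ∧ c ≤ n := ms_apply_mem hv hiin
  have hein : 1 ≤ e ∧ e ≤ n := ms_apply_mem hv hi1in
  have H4u : ∀ z, u⁻¹ z ≤ i ↔ z ≤ i := noI_preserve hp
  have hua : u⁻¹ a = i := u.inv_apply_self i
  have hub : u⁻¹ b = i + 1 := u.inv_apply_self (i + 1)
  have hvc : v⁻¹ c = i := v.inv_apply_self i
  have hve : v⁻¹ e = i + 1 := v.inv_apply_self (i + 1)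
  have ha_le : a ≤ i := (H4u a).mp (by rw [hua])
  have hb_gt : i < b := by
    by_contra h
    have := (H4u b).mpr (by omega)
    omega
  have hveq : v = (u * sigmaT i) * wordProd p' := by
    rw [hvdef, hudef, wordProd_append, wordProd_cons, mul_assoc]
  have H4v : ∀ z, v⁻¹ z ≤ i ↔ ((z ≤ i ∧ z ≠ a) ∨ z = b) := by
    intro z
    rw [hveq, mul_inv_rev, Equiv.Perm.mul_apply]
    rw [noI_preserve hp']
    rw [mul_inv_rev, Equiv.Perm.mul_apply, sigmaT_inv]
    have hza : z = a ↔ u⁻¹ z = i := by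
      constructor
      · intro h; rw [h, hua]
      · intro h; rw [hadef, ← h, u.apply_inv_self]
    have hzb : z = b ↔ u⁻¹ z = i + 1 := by
      constructor
      · intro h; rw [h, hub]
      · intro h; rw [hbdef, ← h, u.apply_inv_self]
    have hsw : (sigmaT i) (u⁻¹ z) = if u⁻¹ z = i then i + 1
        else if u⁻¹ z = i + 1 then i else u⁻¹ z := by
      simp [sigmaT, Equiv.swap_apply_def]
    rw [hsw]
    have h4 := H4u z
    split_ifs with h1 h2 <;> omega
  have hmemw1 : w⁻¹ b < w⁻¹ a := by
    have : (a, b) ∈ invF n (u * sigmaT i) := by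
      rw [hins1]; exact Finset.mem_insert_self _ _
    exact (mem_invF.mp (hsub1 this)).2.2.2
  have hmemw2 : w⁻¹ e < w⁻¹ c := by
    have : (c, e) ∈ invF n (v * sigmaT i) := by
      rw [hins2]; exact Finset.mem_insert_self _ _
    exact (mem_invF.mp (hsub2 this)).2.2.2
  have hsubu : invF n u ⊆ invF n w := by
    refine Finset.Subset.trans ?_ hsub1
    rw [hins1]; exact Finset.subset_insert _ _
  have hsubv : invF n v ⊆ invF n w := by
    refine Finset.Subset.trans ?_ hsub2
    rw [hins2]; exact Finset.subset_insert _ _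
  have G2 : ∀ x, x ≤ i → a < x → w⁻¹ x < w⁻¹ a := by
    intro x hx1 hx2
    have hxa : x ≠ a := by omega
    have hui : u⁻¹ x ≤ i := (H4u x).mpr hx1
    have hne : u⁻¹ x ≠ i := fun h => hxa (by rw [hadef, ← h, u.apply_inv_self])
    have hmem : (a, x) ∈ invF n u :=
      mem_invF.mpr ⟨hain, ⟨by omega, by omega⟩, hx2, by rw [hua]; omega⟩
    exact (mem_invF.mp (hsubu hmem)).2.2.2
  have G3 : ∀ y, i < y → y < b → w⁻¹ b < w⁻¹ y := by
    intro y hy1 hy2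
    have hyb : y ≠ b := by omega
    have hui : ¬ u⁻¹ y ≤ i := fun h => by have := (H4u y).mp h; omega
    have hne : u⁻¹ y ≠ i + 1 := fun h => hyb (by rw [hbdef, ← h, u.apply_inv_self])
    have hmem : (y, b) ∈ invF n u :=
      mem_invF.mpr ⟨⟨by omega, by omega⟩, hbin, hy2, by rw [hub]; omega⟩
    exact (mem_invF.mp (hsubu hmem)).2.2.2
  have G4 : ∀ x, ((x ≤ i ∧ x ≠ a) ∨ x = b) → c < x → w⁻¹ x < w⁻¹ c := by
    intro x hx1 hx2
    have hxc : x ≠ c := by omega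
    have hvi : v⁻¹ x ≤ i := (H4v x).mpr hx1
    have hne : v⁻¹ x ≠ i := fun h => hxc (by rw [hcdef, ← h, v.apply_inv_self])
    have hxn : x ≤ n := by
      rcases hx1 with ⟨h, -⟩ | h
      · omega
      · omega
    have hmem : (c, x) ∈ invF n v :=
      mem_invF.mpr ⟨hcin, ⟨by omega, hxn⟩, hx2, by rw [hvc]; omega⟩
    exact (mem_invF.mp (hsubv hmem)).2.2.2
  have G5 : ∀ y, ((i < y ∨ y = a) ∧ y ≠ b) → y < e → w⁻¹ e < w⁻¹ y := by
    intro y hy1 hy2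
    have hye : y ≠ e := by omega
    have hvi : ¬ v⁻¹ y ≤ i := by
      intro h
      rcases (H4v y).mp h with ⟨h1, h2⟩ | h1
      · rcases hy1.1 with h3 | h3
        · omega
        · exact h2 h3
      · exact hy1.2 h1
    have hne : v⁻¹ y ≠ i + 1 := fun h => hye (by rw [hedef, ← h, v.apply_inv_self])
    have hy1n : 1 ≤ y := by
      rcases hy1.1 with h | h
      · omega
      · omega
    have hmem : (y, e) ∈ invF n v :=
      mem_invF.mpr ⟨⟨hy1n, by omega⟩, hein, hy2, by rw [hve]; omega⟩
    exact (mem_invF.mp (hsubv hmem)).2.2.2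
  have hc_side : (c ≤ i ∧ c ≠ a) ∨ c = b := (H4v c).mp (by rw [hvc])
  have he_side : ¬((e ≤ i ∧ e ≠ a) ∨ e = b) := by
    intro h
    have := (H4v e).mpr h
    rw [hve] at this
    omega
  have he_ne_b : e ≠ b := fun h => he_side (Or.inr h)
  rcases hc_side with ⟨hc_le, hc_ne⟩ | hcb
  · by_cases hea : e = a
    · -- CASE 3
      have hca : c < a := by rw [← hea]; exact hce
      have h_ac : w⁻¹ a < w⁻¹ c := by rw [← hea]; exact hmemw2
      by_cases hLa : w⁻¹ a ≤ i
      · have hLb : w⁻¹ b ≤ i := by omega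
        obtain ⟨α, hα1, hα2⟩ := hexL b hb_gt hLb
        by_cases hαlt : α < a
        · exact hnw ⟨α, a, b, hα1, hb_gt, hαlt, by omega, hLb, hα2, hmemw1, by omega⟩
        · have hαa : α ≠ a := by intro h; rw [h] at hα2; omega
          have := G2 α hα1 (by omega)
          omega
      · have : i < w⁻¹ c := by omega
        exact hc_ne (huL c a hc_le this ha_le (by omega))
    · -- CASE 2
      have he_gt : i < e := by
        by_contra h
        exact hea ((fun hh => by
          by_contra hne
          exact he_side (Or.inl ⟨by omega, hne⟩)) h)
      have hG4b : w⁻¹ b < w⁻¹ c := G4 b (Or.inr rfl) (by omega)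
      have hG5a : w⁻¹ e < w⁻¹ a := G5 a ⟨Or.inr rfl, by omega⟩ (by omega)
      by_cases hLa : w⁻¹ a ≤ i
      · have hLb : w⁻¹ b ≤ i := by omega
        by_cases hLc : w⁻¹ c ≤ i
        · have hLe : w⁻¹ e ≤ i := by omega
          exact he_ne_b (huR e b he_gt hLe hb_gt hLb)
        · by_cases hca : c < a
          · exact hnw ⟨c, a, b, hc_le, hb_gt, hca, by omega, hLb, by omega, hmemw1, by omega⟩
          · have := G2 c hc_le (by omega)
            omega
      · have hLc : w⁻¹ c ≤ i := by
          by_contra h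
          exact hc_ne (huL c a hc_le (by omega) ha_le (by omega))
        have hLb : w⁻¹ b ≤ i := by omega
        have hLe : w⁻¹ e ≤ i := by omega
        exact he_ne_b (huR e b he_gt hLe hb_gt hLb)
  · -- CASE 1
    have hb_e : b < e := by rw [← hcb]; exact hce
    have he_gt : i < e := by omega
    have h_eb : w⁻¹ e < w⁻¹ b := by rw [← hcb]; exact hmemw2
    by_cases hLa : w⁻¹ a ≤ i
    · have hLb : w⁻¹ b ≤ i := by omega
      have hLe : w⁻¹ e ≤ i := by omega
      exact he_ne_b (huR e b he_gt hLe hb_gt hLb)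
    · obtain ⟨β0, hβ1, hβ2⟩ := hexR a ha_le (by omega)
      by_cases hLe : w⁻¹ e ≤ i
      · exact hnw ⟨a, b, e, ha_le, he_gt, hab, hb_e, hLe, by omega, h_eb, hmemw1⟩
      · have hLb : ¬ w⁻¹ b ≤ i := by omega
        have hβb : β0 ≠ b := fun h => hLb (h ▸ hβ2)
        by_cases hbβ : b < β0
        · exact hnw ⟨a, b, β0, ha_le, hβ1, hab, hbβ, hβ2, by omega, by omega, hmemw1⟩
        · have := G3 β0 hβ1 (by omega)
          omega

section Sorting

variable {key : ℕ → ℕ}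

/-- monotonicity of positions in a sorted permutation -/
lemma sort_inv_lt {u : Equiv.Perm ℕ}
    (hrank : ∀ x, u⁻¹ x = if 1 ≤ x ∧ x ≤ n
      then ((Finset.Icc 1 n).filter fun y => key y ≤ key x).card else x)
    (hinj : ∀ x, 1 ≤ x → x ≤ n → ∀ y, 1 ≤ y → y ≤ n → key x = key y → x = y)
    {x y : ℕ} (hx : 1 ≤ x ∧ x ≤ n) (hy : 1 ≤ y ∧ y ≤ n) :
    u⁻¹ x < u⁻¹ y ↔ key x < key y := by
  rw [hrank x, hrank y, if_pos hx, if_pos hy]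
  constructor
  · intro h
    rcases lt_trichotomy (key x) (key y) with h1 | h1 | h1
    · exact h1
    · exact absurd (hinj x hx.1 hx.2 y hy.1 hy.2 h1) (by
        intro hh; subst hh; omega)
    · have := rank_lt_rank n key hx h1
      omega
  · intro h
    exact rank_lt_rank n key hy h

lemma sort_invF_subset {u : Equiv.Perm ℕ}
    (hrank : ∀ x, u⁻¹ x = if 1 ≤ x ∧ x ≤ n
      then ((Finset.Icc 1 n).filter fun y => key y ≤ key x).card else x)
    (hinj : ∀ x, 1 ≤ x → x ≤ n → ∀ y, 1 ≤ y → y ≤ n → key x = key y → x = y)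
    (hcomp : ∀ x y, 1 ≤ x → x ≤ n → 1 ≤ y → y ≤ n → x < y → key y < key x → w⁻¹ y < w⁻¹ x) :
    invF n u ⊆ invF n w := by
  rintro ⟨x, y⟩ hmem
  obtain ⟨hx, hy, hxy, hlt⟩ := mem_invF.mp hmem
  refine mem_invF.mpr ⟨hx, hy, hxy, ?_⟩
  exact hcomp x y hx.1 hx.2 hy.1 hy.2 hxy ((sort_inv_lt hrank hinj hy hx).mp hlt)

lemma sort_invF_subset_sort {u u' : Equiv.Perm ℕ} {key' : ℕ → ℕ}
    (hrank : ∀ x, u⁻¹ x = if 1 ≤ x ∧ x ≤ n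
      then ((Finset.Icc 1 n).filter fun y => key y ≤ key x).card else x)
    (hinj : ∀ x, 1 ≤ x → x ≤ n → ∀ y, 1 ≤ y → y ≤ n → key x = key y → x = y)
    (hrank' : ∀ x, u'⁻¹ x = if 1 ≤ x ∧ x ≤ n
      then ((Finset.Icc 1 n).filter fun y => key' y ≤ key' x).card else x)
    (hinj' : ∀ x, 1 ≤ x → x ≤ n → ∀ y, 1 ≤ y → y ≤ n → key' x = key' y → x = y)
    (hcomp : ∀ x y, 1 ≤ x → x ≤ n → 1 ≤ y → y ≤ n → x < y → key y < key x → key' y < key' x) :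
    invF n u ⊆ invF n u' := by
  rintro ⟨x, y⟩ hmem
  obtain ⟨hx, hy, hxy, hlt⟩ := mem_invF.mp hmem
  refine mem_invF.mpr ⟨hx, hy, hxy, ?_⟩
  exact (sort_inv_lt hrank' hinj' hy hx).mpr
    (hcomp x y hx.1 hx.2 hy.1 hy.2 hxy ((sort_inv_lt hrank hinj hy hx).mp hlt))

end Sorting

/-- assembling a reduced word with two occurrences of `i` from a weak-order chain. -/
lemma assemble (hw : MemSymm n w) (hi1 : 1 ≤ i) (hi2 : i + 1 ≤ n)
    {u1 u2 : Equiv.Perm ℕ} (hu1 : MemSymm n u1) (hu2 : MemSymm n u2)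
    (hasc1 : u1 i < u1 (i + 1)) (hasc2 : u2 i < u2 (i + 1))
    (hsub1 : invF n (u1 * sigmaT i) ⊆ invF n u2)
    (hsub2 : invF n (u2 * sigmaT i) ⊆ invF n w) :
    ∃ s, (∀ j ∈ s, 1 ≤ j ∧ j ≤ n - 1) ∧ wordProd s = w ∧
      s.length = (invF n w).card ∧ 2 ≤ s.count i := by
  have hσ : MemSymm n (sigmaT i) := ms_sigmaT hi1 hi2
  obtain ⟨s1, hl1, hp1, hc1⟩ := chain_word (ms_one (n := n)) hu1
    (by rw [invF_one]; exact Finset.empty_subset _)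
  obtain ⟨s2, hl2, hp2, hc2⟩ := chain_word (ms_mul hu1 hσ) hu2 hsub1
  obtain ⟨s3, hl3, hp3, hc3⟩ := chain_word (ms_mul hu2 hσ) hw hsub2
  obtain ⟨hins1, hnm1⟩ := invF_mul_sigmaT hu1 hi1 hi2 hasc1
  obtain ⟨hins2, hnm2⟩ := invF_mul_sigmaT hu2 hi1 hi2 hasc2
  have hcard1 : (invF n (u1 * sigmaT i)).card = (invF n u1).card + 1 := by
    rw [hins1, Finset.card_insert_of_notMem hnm1]
  have hcard2 : (invF n (u2 * sigmaT i)).card = (invF n u2).card + 1 := by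
    rw [hins2, Finset.card_insert_of_notMem hnm2]
  have e1 : wordProd s1 = u1 := by rwa [one_mul] at hp1
  refine ⟨s1 ++ i :: (s2 ++ i :: s3), ?_, ?_, ?_, ?_⟩
  · intro m hm
    simp only [List.mem_append, List.mem_cons] at hm
    rcases hm with h | h | h | h | h
    · exact hl1 m h
    · subst h; exact ⟨hi1, by omega⟩
    · exact hl2 m h
    · subst h; exact ⟨hi1, by omega⟩
    · exact hl3 m h
  · rw [wordProd_append, wordProd_cons, wordProd_append, wordProd_cons, e1]
    simp only [← mul_assoc]
    rw [hp2, hp3]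
  · have hc1' : s1.length = (invF n u1).card := by
      rw [invF_one] at hc1
      simpa using hc1
    simp only [List.length_append, List.length_cons]
    omega
  · simp only [List.count_append, List.count_cons_self]
    omega

def keyA1 (n i : ℕ) (w : Equiv.Perm ℕ) (q β : ℕ) (x : ℕ) : ℕ :=
  if x = q then n + 1 else if x = β then n + 2
  else if x ≤ i then w⁻¹ x else n + 2 + w⁻¹ x

def keyA2 (n i : ℕ) (w : Equiv.Perm ℕ) (α q β : ℕ) (x : ℕ) : ℕ :=
  if x = α then n + 1 else if x = q then n + 2 else if x = β then w⁻¹ β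
  else if x ≤ i then w⁻¹ x else n + 2 + w⁻¹ x

set_option maxHeartbeats 3200000 in
lemma planA (hw : MemSymm n w) (hi1 : 1 ≤ i) (hi2 : i + 1 ≤ n)
    {α q β : ℕ}
    (hα0 : 1 ≤ α) (hαi : α ≤ i) (hαp : i < w⁻¹ α)
    (hβi : i < β) (hβn : β ≤ n) (hβp : w⁻¹ β ≤ i)
    (hαq : α < q) (hqβ : q < β) (hqi : q ≤ i)
    (hqo1 : w⁻¹ β < w⁻¹ q) (hqo2 : w⁻¹ q < w⁻¹ α)
    (hLft : ∀ x, x ≤ i → x ≠ α → w⁻¹ x ≤ i)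
    (hRft : ∀ y, i < y → y ≠ β → i < w⁻¹ y)
    (hmax : ∀ y, q < y → y ≤ i → w⁻¹ y < w⁻¹ q) :
    ∃ s, (∀ j ∈ s, 1 ≤ j ∧ j ≤ n - 1) ∧ wordProd s = w ∧
      s.length = (invF n w).card ∧ 2 ≤ s.count i := by
  classical
  have hq1 : 1 ≤ q := by omega
  have hqn : q ≤ n := by omega
  have hβ1 : 1 ≤ β := by omega
  have hαn : α ≤ n := by omega
  have hwβ := ms_inv_mem hw ⟨hβ1, hβn⟩
  have hwq := ms_inv_mem hw ⟨hq1, hqn⟩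
  have hwα := ms_inv_mem hw ⟨hα0, hαn⟩
  have hwinj : ∀ x y : ℕ, w⁻¹ x = w⁻¹ y → x = y := fun x y h => by
    have := congrArg w h
    rwa [w.apply_inv_self, w.apply_inv_self] at this
  have hinj1 : ∀ x, 1 ≤ x → x ≤ n → ∀ y, 1 ≤ y → y ≤ n →
      keyA1 n i w q β x = keyA1 n i w q β y → x = y := by
    intro x hx1 hx2 y hy1 hy2 hkey
    have hbx := ms_inv_mem hw ⟨hx1, hx2⟩
    have hby := ms_inv_mem hw ⟨hy1, hy2⟩
    simp only [keyA1] at hkey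
    split_ifs at hkey <;>
      first
        | omega
        | exact hwinj _ _ (by omega)
        | (subst_vars; first | omega | exact hwinj _ _ (by omega))
  have hinj2 : ∀ x, 1 ≤ x → x ≤ n → ∀ y, 1 ≤ y → y ≤ n →
      keyA2 n i w α q β x = keyA2 n i w α q β y → x = y := by
    intro x hx1 hx2 y hy1 hy2 hkey
    have hbx := ms_inv_mem hw ⟨hx1, hx2⟩
    have hby := ms_inv_mem hw ⟨hy1, hy2⟩
    simp only [keyA2] at hkey
    split_ifs at hkey <;>
      first
        | omega
        | exact hwinj _ _ (by omega)
        | (subst_vars; first | omega | exact hwinj _ _ (by omega))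
  obtain ⟨u1, hu1, hrank1⟩ := exists_sortPerm n (keyA1 n i w q β) hinj1
  obtain ⟨u2, hu2, hrank2⟩ := exists_sortPerm n (keyA2 n i w α q β) hinj2
  -- subset relations
  have hcomp12 : ∀ x y, 1 ≤ x → x ≤ n → 1 ≤ y → y ≤ n → x < y →
      keyA1 n i w q β y < keyA1 n i w q β x →
      keyA2 n i w α q β y < keyA2 n i w α q β x := by
    intro x y hx1 hx2 hy1 hy2 hxy hkey
    have hbx := ms_inv_mem hw ⟨hx1, hx2⟩
    have hby := ms_inv_mem hw ⟨hy1, hy2⟩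
    simp only [keyA1] at hkey
    simp only [keyA2]
    split_ifs at hkey ⊢ <;>
      first
        | omega
        | (subst_vars;
            first
              | omega
              | exact absurd (hLft x (by omega) (by omega)) (by omega)
              | exact absurd (hLft y (by omega) (by omega)) (by omega)
              | exact absurd (hRft x (by omega) (by omega)) (by omega)
              | exact absurd (hRft y (by omega) (by omega)) (by omega))
  have hcomp2w : ∀ x y, 1 ≤ x → x ≤ n → 1 ≤ y → y ≤ n → x < y →
      keyA2 n i w α q β y < keyA2 n i w α q β x → w⁻¹ y < w⁻¹ x := by
    intro x y hx1 hx2 hy1 hy2 hxy hkey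
    have hbx := ms_inv_mem hw ⟨hx1, hx2⟩
    have hby := ms_inv_mem hw ⟨hy1, hy2⟩
    simp only [keyA2] at hkey
    split_ifs at hkey <;>
      first
        | omega
        | (subst_vars;
            first
              | omega
              | exact hmax y (by omega) (by omega)
              | exact hmax x (by omega) (by omega)
              | exact lt_of_le_of_lt (hLft y (by omega) (by omega)) hαp
              | exact lt_of_le_of_lt (hLft y (by omega) (by omega)) (hRft x (by omega) (by omega))
              | exact lt_of_le_of_lt hβp (hRft x (by omega) (by omega))
              | exact absurd (hLft x (by omega) (by omega)) (by omega)
              | exact absurd (hLft y (by omega) (by omega)) (by omega)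
              | exact absurd (hRft x (by omega) (by omega)) (by omega)
              | exact absurd (hRft y (by omega) (by omega)) (by omega))
  -- rank computations
  have hfq : ((Finset.Icc 1 n).filter fun z => keyA1 n i w q β z ≤ keyA1 n i w q β q)
      = Finset.Icc 1 i := by
    have hkq : keyA1 n i w q β q = n + 1 := by
      simp only [keyA1]; split_ifs <;> omega
    ext z
    simp only [Finset.mem_filter, Finset.mem_Icc, hkq]
    constructor
    · rintro ⟨⟨hz1, hz2⟩, hk⟩
      have hb := ms_inv_mem hw ⟨hz1, hz2⟩
      refine ⟨hz1, ?_⟩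
      simp only [keyA1] at hk
      split_ifs at hk <;> omega
    · rintro ⟨hz1, hz2⟩
      have hzn : z ≤ n := by omega
      have hb := ms_inv_mem hw ⟨hz1, hzn⟩
      refine ⟨⟨hz1, hzn⟩, ?_⟩
      simp only [keyA1]
      split_ifs <;> omega
  have hfβ : ((Finset.Icc 1 n).filter fun z => keyA1 n i w q β z ≤ keyA1 n i w q β β)
      = insert β (Finset.Icc 1 i) := by
    have hkβ : keyA1 n i w q β β = n + 2 := by
      simp only [keyA1]; split_ifs <;> omega
    ext z
    simp only [Finset.mem_filter, Finset.mem_Icc, Finset.mem_insert, hkβ]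
    constructor
    · rintro ⟨⟨hz1, hz2⟩, hk⟩
      have hb := ms_inv_mem hw ⟨hz1, hz2⟩
      simp only [keyA1] at hk
      split_ifs at hk <;> omega
    · rintro (rfl | ⟨hz1, hz2⟩)
      · refine ⟨⟨hβ1, hβn⟩, ?_⟩
        simp only [keyA1]; split_ifs <;> omega
      · have hzn : z ≤ n := by omega
        have hb := ms_inv_mem hw ⟨hz1, hzn⟩
        refine ⟨⟨hz1, hzn⟩, ?_⟩
        simp only [keyA1]
        split_ifs <;> omega
  have hrkq : u1⁻¹ q = i := by
    rw [hrank1 q, if_pos ⟨hq1, hqn⟩, hfq, Nat.card_Icc]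
    omega
  have hrkβ : u1⁻¹ β = i + 1 := by
    rw [hrank1 β, if_pos ⟨hβ1, hβn⟩, hfβ,
      Finset.card_insert_of_notMem (by simp only [Finset.mem_Icc]; omega), Nat.card_Icc]
    omega
  have hfα2 : ((Finset.Icc 1 n).filter fun z => keyA2 n i w α q β z ≤ keyA2 n i w α q β α)
      = insert β ((Finset.Icc 1 i).erase q) := by
    have hkα : keyA2 n i w α q β α = n + 1 := by
      simp only [keyA2]; split_ifs <;> omega
    ext z
    simp only [Finset.mem_filter, Finset.mem_Icc, Finset.mem_insert, Finset.mem_erase, hkα]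
    constructor
    · rintro ⟨⟨hz1, hz2⟩, hk⟩
      have hb := ms_inv_mem hw ⟨hz1, hz2⟩
      simp only [keyA2] at hk
      split_ifs at hk <;> first | omega | (subst_vars; omega)
    · rintro (rfl | ⟨hzq, hz1, hz2⟩)
      · refine ⟨⟨hβ1, hβn⟩, ?_⟩
        simp only [keyA2]; split_ifs <;> omega
      · have hzn : z ≤ n := by omega
        have hb := ms_inv_mem hw ⟨hz1, hzn⟩
        refine ⟨⟨hz1, hzn⟩, ?_⟩
        simp only [keyA2]
        split_ifs <;> omega
  have hfq2 : ((Finset.Icc 1 n).filter fun z => keyA2 n i w α q β z ≤ keyA2 n i w α q β q)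
      = insert β (Finset.Icc 1 i) := by
    have hkq : keyA2 n i w α q β q = n + 2 := by
      simp only [keyA2]; split_ifs <;> omega
    ext z
    simp only [Finset.mem_filter, Finset.mem_Icc, Finset.mem_insert, hkq]
    constructor
    · rintro ⟨⟨hz1, hz2⟩, hk⟩
      have hb := ms_inv_mem hw ⟨hz1, hz2⟩
      simp only [keyA2] at hk
      split_ifs at hk <;> first | omega | (subst_vars; omega)
    · rintro (rfl | ⟨hz1, hz2⟩)
      · refine ⟨⟨hβ1, hβn⟩, ?_⟩
        simp only [keyA2]; split_ifs <;> omega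
      · have hzn : z ≤ n := by omega
        have hb := ms_inv_mem hw ⟨hz1, hzn⟩
        refine ⟨⟨hz1, hzn⟩, ?_⟩
        simp only [keyA2]
        split_ifs <;> omega
  have hrkα2 : u2⁻¹ α = i := by
    rw [hrank2 α, if_pos ⟨hα0, hαn⟩, hfα2]
    rw [Finset.card_insert_of_notMem (by simp only [Finset.mem_erase, Finset.mem_Icc]; omega),
      Finset.card_erase_of_mem (by simp only [Finset.mem_Icc]; omega), Nat.card_Icc]
    omega
  have hrkq2 : u2⁻¹ q = i + 1 := by
    rw [hrank2 q, if_pos ⟨hq1, hqn⟩, hfq2,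
      Finset.card_insert_of_notMem (by simp only [Finset.mem_Icc]; omega), Nat.card_Icc]
    omega
  -- one-line values
  have happ1i : u1 i = q := by rw [← hrkq, u1.apply_inv_self]
  have happ1i' : u1 (i + 1) = β := by rw [← hrkβ, u1.apply_inv_self]
  have happ2i : u2 i = α := by rw [← hrkα2, u2.apply_inv_self]
  have happ2i' : u2 (i + 1) = q := by rw [← hrkq2, u2.apply_inv_self]
  -- memberships
  have hkey2β : keyA2 n i w α q β β = w⁻¹ β := by
    simp only [keyA2]; split_ifs <;> omega
  have hkey2q : keyA2 n i w α q β q = n + 2 := by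
    simp only [keyA2]; split_ifs <;> omega
  have hmemqβ2 : (q, β) ∈ invF n u2 := by
    refine mem_invF.mpr ⟨⟨hq1, hqn⟩, ⟨hβ1, hβn⟩, by omega, ?_⟩
    rw [sort_inv_lt hrank2 hinj2 ⟨hβ1, hβn⟩ ⟨hq1, hqn⟩]
    rw [hkey2β, hkey2q]
    omega
  have hmemαq : (α, q) ∈ invF n w :=
    mem_invF.mpr ⟨⟨hα0, hαn⟩, ⟨hq1, hqn⟩, by omega, hqo2⟩
  obtain ⟨hins1, -⟩ := invF_mul_sigmaT hu1 hi1 hi2 (by rw [happ1i, happ1i']; omega)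
  obtain ⟨hins2, -⟩ := invF_mul_sigmaT hu2 hi1 hi2 (by rw [happ2i, happ2i']; omega)
  refine assemble hw hi1 hi2 hu1 hu2 (by rw [happ1i, happ1i']; omega)
    (by rw [happ2i, happ2i']; omega) ?_ ?_
  · rw [hins1, happ1i, happ1i']
    refine Finset.insert_subset hmemqβ2 ?_
    exact sort_invF_subset_sort hrank1 hinj1 hrank2 hinj2 hcomp12
  · rw [hins2, happ2i, happ2i']
    refine Finset.insert_subset hmemαq ?_
    exact sort_invF_subset hrank2 hinj2 hcomp2w

def keyB1 (n i : ℕ) (w : Equiv.Perm ℕ) (α q : ℕ) (x : ℕ) : ℕ :=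
  if x = α then n + 1 else if x = q then n + 2
  else if x ≤ i then w⁻¹ x else n + 2 + w⁻¹ x

def keyB2 (n i : ℕ) (w : Equiv.Perm ℕ) (α q β : ℕ) (x : ℕ) : ℕ :=
  if x = q then n + 1 else if x = β then n + 2 else if x = α then n + 2 + w⁻¹ α
  else if x ≤ i then w⁻¹ x else n + 2 + w⁻¹ x

set_option maxHeartbeats 3200000 in
lemma planB (hw : MemSymm n w) (hi1 : 1 ≤ i) (hi2 : i + 1 ≤ n)
    {α q β : ℕ}
    (hα0 : 1 ≤ α) (hαi : α ≤ i) (hαp : i < w⁻¹ α)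
    (hβi : i < β) (hβn : β ≤ n) (hβp : w⁻¹ β ≤ i)
    (hαq : α < q) (hqβ : q < β) (hiq : i < q)
    (hqo1 : w⁻¹ β < w⁻¹ q) (hqo2 : w⁻¹ q < w⁻¹ α)
    (hLft : ∀ x, x ≤ i → x ≠ α → w⁻¹ x ≤ i)
    (hRft : ∀ y, i < y → y ≠ β → i < w⁻¹ y)
    (hmin : ∀ y, i < y → y < q → w⁻¹ q < w⁻¹ y) :
    ∃ s, (∀ j ∈ s, 1 ≤ j ∧ j ≤ n - 1) ∧ wordProd s = w ∧
      s.length = (invF n w).card ∧ 2 ≤ s.count i := by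
  classical
  have hq1 : 1 ≤ q := by omega
  have hqn : q ≤ n := by omega
  have hβ1 : 1 ≤ β := by omega
  have hαn : α ≤ n := by omega
  have hwβ := ms_inv_mem hw ⟨hβ1, hβn⟩
  have hwq := ms_inv_mem hw ⟨hq1, hqn⟩
  have hwα := ms_inv_mem hw ⟨hα0, hαn⟩
  have hwinj : ∀ x y : ℕ, w⁻¹ x = w⁻¹ y → x = y := fun x y h => by
    have := congrArg w h
    rwa [w.apply_inv_self, w.apply_inv_self] at this
  have hinj1 : ∀ x, 1 ≤ x → x ≤ n → ∀ y, 1 ≤ y → y ≤ n →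
      keyB1 n i w α q x = keyB1 n i w α q y → x = y := by
    intro x hx1 hx2 y hy1 hy2 hkey
    have hbx := ms_inv_mem hw ⟨hx1, hx2⟩
    have hby := ms_inv_mem hw ⟨hy1, hy2⟩
    simp only [keyB1] at hkey
    split_ifs at hkey <;>
      first
        | omega
        | exact hwinj _ _ (by omega)
        | (subst_vars; first | omega | exact hwinj _ _ (by omega))
  have hinj2 : ∀ x, 1 ≤ x → x ≤ n → ∀ y, 1 ≤ y → y ≤ n →
      keyB2 n i w α q β x = keyB2 n i w α q β y → x = y := by
    intro x hx1 hx2 y hy1 hy2 hkey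
    have hbx := ms_inv_mem hw ⟨hx1, hx2⟩
    have hby := ms_inv_mem hw ⟨hy1, hy2⟩
    simp only [keyB2] at hkey
    split_ifs at hkey <;>
      first
        | omega
        | exact hwinj _ _ (by omega)
        | (subst_vars; first | omega | exact hwinj _ _ (by omega))
  obtain ⟨u1, hu1, hrank1⟩ := exists_sortPerm n (keyB1 n i w α q) hinj1
  obtain ⟨u2, hu2, hrank2⟩ := exists_sortPerm n (keyB2 n i w α q β) hinj2
  have hcomp12 : ∀ x y, 1 ≤ x → x ≤ n → 1 ≤ y → y ≤ n → x < y →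
      keyB1 n i w α q y < keyB1 n i w α q x →
      keyB2 n i w α q β y < keyB2 n i w α q β x := by
    intro x y hx1 hx2 hy1 hy2 hxy hkey
    have hbx := ms_inv_mem hw ⟨hx1, hx2⟩
    have hby := ms_inv_mem hw ⟨hy1, hy2⟩
    simp only [keyB1] at hkey
    simp only [keyB2]
    split_ifs at hkey ⊢ <;>
      first
        | omega
        | (subst_vars;
            first
              | omega
              | exact absurd (hLft x (by omega) (by omega)) (by omega)
              | exact absurd (hLft y (by omega) (by omega)) (by omega)
              | exact absurd (hRft x (by omega) (by omega)) (by omega)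
              | exact absurd (hRft y (by omega) (by omega)) (by omega))
  have hcomp2w : ∀ x y, 1 ≤ x → x ≤ n → 1 ≤ y → y ≤ n → x < y →
      keyB2 n i w α q β y < keyB2 n i w α q β x → w⁻¹ y < w⁻¹ x := by
    intro x y hx1 hx2 hy1 hy2 hxy hkey
    have hbx := ms_inv_mem hw ⟨hx1, hx2⟩
    have hby := ms_inv_mem hw ⟨hy1, hy2⟩
    simp only [keyB2] at hkey
    split_ifs at hkey <;>
      first
        | omega
        | (subst_vars;
            first
              | omega
              | exact hmin x (by omega) (by omega)
              | exact hmin y (by omega) (by omega)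
              | exact lt_of_le_of_lt (hLft y (by omega) (by omega)) hαp
              | exact lt_of_le_of_lt (hLft y (by omega) (by omega)) (hRft x (by omega) (by omega))
              | exact lt_of_le_of_lt hβp (hRft x (by omega) (by omega))
              | exact absurd (hLft x (by omega) (by omega)) (by omega)
              | exact absurd (hLft y (by omega) (by omega)) (by omega)
              | exact absurd (hRft x (by omega) (by omega)) (by omega)
              | exact absurd (hRft y (by omega) (by omega)) (by omega))
  -- rank computations
  have hfα : ((Finset.Icc 1 n).filter fun z => keyB1 n i w α q z ≤ keyB1 n i w α q α)
      = Finset.Icc 1 i := by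
    have hkα : keyB1 n i w α q α = n + 1 := by
      simp only [keyB1]; split_ifs <;> omega
    ext z
    simp only [Finset.mem_filter, Finset.mem_Icc, hkα]
    constructor
    · rintro ⟨⟨hz1, hz2⟩, hk⟩
      have hb := ms_inv_mem hw ⟨hz1, hz2⟩
      refine ⟨hz1, ?_⟩
      simp only [keyB1] at hk
      split_ifs at hk <;> omega
    · rintro ⟨hz1, hz2⟩
      have hzn : z ≤ n := by omega
      have hb := ms_inv_mem hw ⟨hz1, hzn⟩
      refine ⟨⟨hz1, hzn⟩, ?_⟩
      simp only [keyB1]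
      split_ifs <;> omega
  have hfq : ((Finset.Icc 1 n).filter fun z => keyB1 n i w α q z ≤ keyB1 n i w α q q)
      = insert q (Finset.Icc 1 i) := by
    have hkq : keyB1 n i w α q q = n + 2 := by
      simp only [keyB1]; split_ifs <;> omega
    ext z
    simp only [Finset.mem_filter, Finset.mem_Icc, Finset.mem_insert, hkq]
    constructor
    · rintro ⟨⟨hz1, hz2⟩, hk⟩
      have hb := ms_inv_mem hw ⟨hz1, hz2⟩
      simp only [keyB1] at hk
      split_ifs at hk <;> omega
    · rintro (rfl | ⟨hz1, hz2⟩)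
      · refine ⟨⟨hq1, hqn⟩, ?_⟩
        simp only [keyB1]; split_ifs <;> omega
      · have hzn : z ≤ n := by omega
        have hb := ms_inv_mem hw ⟨hz1, hzn⟩
        refine ⟨⟨hz1, hzn⟩, ?_⟩
        simp only [keyB1]
        split_ifs <;> omega
  have hrkα : u1⁻¹ α = i := by
    rw [hrank1 α, if_pos ⟨hα0, hαn⟩, hfα, Nat.card_Icc]
    omega
  have hrkq : u1⁻¹ q = i + 1 := by
    rw [hrank1 q, if_pos ⟨hq1, hqn⟩, hfq,
      Finset.card_insert_of_notMem (by simp only [Finset.mem_Icc]; omega), Nat.card_Icc]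
    omega
  have hfq2 : ((Finset.Icc 1 n).filter fun z => keyB2 n i w α q β z ≤ keyB2 n i w α q β q)
      = insert q ((Finset.Icc 1 i).erase α) := by
    have hkq : keyB2 n i w α q β q = n + 1 := by
      simp only [keyB2]; split_ifs <;> omega
    ext z
    simp only [Finset.mem_filter, Finset.mem_Icc, Finset.mem_insert, Finset.mem_erase, hkq]
    constructor
    · rintro ⟨⟨hz1, hz2⟩, hk⟩
      have hb := ms_inv_mem hw ⟨hz1, hz2⟩
      simp only [keyB2] at hk
      split_ifs at hk <;> first | omega | (subst_vars; omega)
    · rintro (rfl | ⟨hzα, hz1, hz2⟩)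
      · refine ⟨⟨hq1, hqn⟩, ?_⟩
        simp only [keyB2]; split_ifs <;> omega
      · have hzn : z ≤ n := by omega
        have hb := ms_inv_mem hw ⟨hz1, hzn⟩
        refine ⟨⟨hz1, hzn⟩, ?_⟩
        simp only [keyB2]
        split_ifs <;> omega
  have hfβ2 : ((Finset.Icc 1 n).filter fun z => keyB2 n i w α q β z ≤ keyB2 n i w α q β β)
      = insert β (insert q ((Finset.Icc 1 i).erase α)) := by
    have hkβ : keyB2 n i w α q β β = n + 2 := by
      simp only [keyB2]; split_ifs <;> omega
    ext z
    simp only [Finset.mem_filter, Finset.mem_Icc, Finset.mem_insert, Finset.mem_erase, hkβ]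
    constructor
    · rintro ⟨⟨hz1, hz2⟩, hk⟩
      have hb := ms_inv_mem hw ⟨hz1, hz2⟩
      simp only [keyB2] at hk
      split_ifs at hk <;> first | omega | (subst_vars; omega)
    · rintro (rfl | rfl | ⟨hzα, hz1, hz2⟩)
      · refine ⟨⟨hβ1, hβn⟩, ?_⟩
        simp only [keyB2]; split_ifs <;> omega
      · refine ⟨⟨hq1, hqn⟩, ?_⟩
        simp only [keyB2]; split_ifs <;> omega
      · have hzn : z ≤ n := by omega
        have hb := ms_inv_mem hw ⟨hz1, hzn⟩
        refine ⟨⟨hz1, hzn⟩, ?_⟩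
        simp only [keyB2]
        split_ifs <;> omega
  have hrkq2 : u2⁻¹ q = i := by
    rw [hrank2 q, if_pos ⟨hq1, hqn⟩, hfq2]
    rw [Finset.card_insert_of_notMem (by simp only [Finset.mem_erase, Finset.mem_Icc]; omega),
      Finset.card_erase_of_mem (by simp only [Finset.mem_Icc]; omega), Nat.card_Icc]
    omega
  have hrkβ2 : u2⁻¹ β = i + 1 := by
    rw [hrank2 β, if_pos ⟨hβ1, hβn⟩, hfβ2]
    rw [Finset.card_insert_of_notMem
        (by simp only [Finset.mem_insert, Finset.mem_erase, Finset.mem_Icc]; omega),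
      Finset.card_insert_of_notMem (by simp only [Finset.mem_erase, Finset.mem_Icc]; omega),
      Finset.card_erase_of_mem (by simp only [Finset.mem_Icc]; omega), Nat.card_Icc]
    omega
  have happ1i : u1 i = α := by rw [← hrkα, u1.apply_inv_self]
  have happ1i' : u1 (i + 1) = q := by rw [← hrkq, u1.apply_inv_self]
  have happ2i : u2 i = q := by rw [← hrkq2, u2.apply_inv_self]
  have happ2i' : u2 (i + 1) = β := by rw [← hrkβ2, u2.apply_inv_self]
  have hkey2α : keyB2 n i w α q β α = n + 2 + w⁻¹ α := by
    simp only [keyB2]; split_ifs <;> omega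
  have hkey2q : keyB2 n i w α q β q = n + 1 := by
    simp only [keyB2]; split_ifs <;> omega
  have hmemαq2 : (α, q) ∈ invF n u2 := by
    refine mem_invF.mpr ⟨⟨hα0, hαn⟩, ⟨hq1, hqn⟩, by omega, ?_⟩
    rw [sort_inv_lt hrank2 hinj2 ⟨hq1, hqn⟩ ⟨hα0, hαn⟩]
    rw [hkey2α, hkey2q]
    omega
  have hmemqβ : (q, β) ∈ invF n w :=
    mem_invF.mpr ⟨⟨hq1, hqn⟩, ⟨hβ1, hβn⟩, by omega, hqo1⟩
  obtain ⟨hins1, -⟩ := invF_mul_sigmaT hu1 hi1 hi2 (by rw [happ1i, happ1i']; omega)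
  obtain ⟨hins2, -⟩ := invF_mul_sigmaT hu2 hi1 hi2 (by rw [happ2i, happ2i']; omega)
  refine assemble hw hi1 hi2 hu1 hu2 (by rw [happ1i, happ1i']; omega)
    (by rw [happ2i, happ2i']; omega) ?_ ?_
  · rw [hins1, happ1i, happ1i']
    refine Finset.insert_subset hmemαq2 ?_
    exact sort_invF_subset_sort hrank1 hinj1 hrank2 hinj2 hcomp12
  · rw [hins2, happ2i, happ2i']
    refine Finset.insert_subset hmemqβ ?_
    exact sort_invF_subset hrank2 hinj2 hcomp2w

lemma mem_crossL_iff (hw : MemSymm n w) {x : ℕ} : x ∈ crossL w i ↔ x ≤ i ∧ i < w⁻¹ x := by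
  simp only [crossL, Finset.mem_filter, Finset.mem_Icc]
  constructor
  · rintro ⟨⟨-, h2⟩, h3⟩; exact ⟨h2, h3⟩
  · rintro ⟨h1, h2⟩
    refine ⟨⟨?_, h1⟩, h2⟩
    by_contra h
    have hx0 : x = 0 := by omega
    subst hx0
    have h0 : w 0 = 0 := ms_fix hw (by omega)
    have h0' : w⁻¹ 0 = 0 := w.injective (by rw [w.apply_inv_self, h0])
    omega

lemma mem_crossR_iff (hw : MemSymm n w) {y : ℕ} : y ∈ crossR n w i ↔ i < y ∧ w⁻¹ y ≤ i := by
  simp only [crossR, Finset.mem_filter, Finset.mem_Icc]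
  constructor
  · rintro ⟨-, h2, h3⟩; exact ⟨h2, h3⟩
  · rintro ⟨h1, h2⟩
    refine ⟨⟨by omega, ?_⟩, h1, h2⟩
    by_contra h
    have : w⁻¹ y = y := ms_fix (ms_inv hw) (by omega)
    omega

/-- Pattern existence from two left-crossers and two right-crossers (sorted positions). -/
lemma two_crossers_sorted (hw : MemSymm n w) {s1 s2 t1 t2 : ℕ}
    (hs1 : 1 ≤ s1) (hs12 : s1 < s2) (hs2 : s2 ≤ i) (ht12 : t1 < t2) (ht1 : i < t1)
    (ht2n : t2 ≤ n)
    (hv1 : i < w s1) (hv2 : i < w s2) (hv3 : w t1 ≤ i) (hv4 : w t2 ≤ i) :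
    (∃ x1 x2 x3 : ℕ, 1 ≤ x1 ∧ x1 < x2 ∧ x2 < x3 ∧ x3 ≤ n ∧
         x1 ≤ i ∧ i < x3 ∧
         w x3 < w x2 ∧ w x2 < w x1 ∧ w x3 ≤ i ∧ i < w x1) ∨
    (∃ x1 x2 x3 x4 : ℕ, 1 ≤ x1 ∧ x1 < x2 ∧ x2 < x3 ∧ x3 < x4 ∧ x4 ≤ n ∧
         x2 ≤ i ∧ i < x3 ∧
         w x3 < w x4 ∧ w x4 < w x1 ∧ w x1 < w x2 ∧ w x4 ≤ i ∧ i < w x1) := by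
  have hnes : w s1 ≠ w s2 := fun h => by have := w.injective h; omega
  have hnet : w t1 ≠ w t2 := fun h => by have := w.injective h; omega
  rcases lt_or_gt_of_ne hnes with hs | hs
  · rcases lt_or_gt_of_ne hnet with ht | ht
    · right
      exact ⟨s1, s2, t1, t2, hs1, hs12, by omega, ht12, ht2n, hs2, ht1,
        ht, by omega, hs, by omega, hv1⟩
    · left
      exact ⟨s2, t1, t2, by omega, by omega, ht12, ht2n, hs2, by omega,
        ht, by omega, hv4, hv2⟩
  · left
    exact ⟨s1, s2, t1, hs1, hs12, by omega, by omega, by omega, by omega,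
      by omega, hs, hv3, hv1⟩

lemma two_crossers (hw : MemSymm n w) (hin : i ≤ n) {l1 l2 g1 g2 : ℕ}
    (hl1 : l1 ∈ crossL w i) (hl2 : l2 ∈ crossL w i) (hll : l1 ≠ l2)
    (hg1 : g1 ∈ crossR n w i) (hg2 : g2 ∈ crossR n w i) (hgg : g1 ≠ g2) :
    (∃ x1 x2 x3 : ℕ, 1 ≤ x1 ∧ x1 < x2 ∧ x2 < x3 ∧ x3 ≤ n ∧
         x1 ≤ i ∧ i < x3 ∧
         w x3 < w x2 ∧ w x2 < w x1 ∧ w x3 ≤ i ∧ i < w x1) ∨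
    (∃ x1 x2 x3 x4 : ℕ, 1 ≤ x1 ∧ x1 < x2 ∧ x2 < x3 ∧ x3 < x4 ∧ x4 ≤ n ∧
         x2 ≤ i ∧ i < x3 ∧
         w x3 < w x4 ∧ w x4 < w x1 ∧ w x1 < w x2 ∧ w x4 ≤ i ∧ i < w x1) := by
  obtain ⟨hl1i, hl1p⟩ := (mem_crossL_iff hw).mp hl1
  obtain ⟨hl2i, hl2p⟩ := (mem_crossL_iff hw).mp hl2
  obtain ⟨hg1i, hg1p⟩ := (mem_crossR_iff hw).mp hg1
  obtain ⟨hg2i, hg2p⟩ := (mem_crossR_iff hw).mp hg2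
  have hbl1 : 1 ≤ l1 ∧ l1 ≤ n :=
    ⟨(Finset.mem_Icc.mp (Finset.mem_filter.mp hl1).1).1, by omega⟩
  have hbl2 : 1 ≤ l2 ∧ l2 ≤ n :=
    ⟨(Finset.mem_Icc.mp (Finset.mem_filter.mp hl2).1).1, by omega⟩
  have hbg1 : 1 ≤ g1 ∧ g1 ≤ n := Finset.mem_Icc.mp (Finset.mem_filter.mp hg1).1
  have hbg2 : 1 ≤ g2 ∧ g2 ≤ n := Finset.mem_Icc.mp (Finset.mem_filter.mp hg2).1
  have hwl1 := ms_inv_mem hw hbl1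
  have hwl2 := ms_inv_mem hw hbl2
  have hwg1 := ms_inv_mem hw hbg1
  have hwg2 := ms_inv_mem hw hbg2
  have hSne : w⁻¹ g1 ≠ w⁻¹ g2 := fun h => hgg (w⁻¹.injective h)
  have hTne : w⁻¹ l1 ≠ w⁻¹ l2 := fun h => hll (w⁻¹.injective h)
  have e1 := w.apply_inv_self g1
  have e2 := w.apply_inv_self g2
  have e3 := w.apply_inv_self l1
  have e4 := w.apply_inv_self l2
  rcases lt_or_gt_of_ne hSne with hS | hS <;> rcases lt_or_gt_of_ne hTne with hT | hT
  · exact two_crossers_sorted hw hwg1.1 hS hg2p hT hl1p hwl2.2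
      (by rw [e1]; omega) (by rw [e2]; omega) (by rw [e3]; omega) (by rw [e4]; omega)
  · exact two_crossers_sorted hw hwg1.1 hS hg2p (by omega) hl2p hwl1.2
      (by rw [e1]; omega) (by rw [e2]; omega) (by rw [e4]; omega) (by rw [e3]; omega)
  · exact two_crossers_sorted hw hwg2.1 hS hg1p hT hl1p hwl2.2
      (by rw [e2]; omega) (by rw [e1]; omega) (by rw [e3]; omega) (by rw [e4]; omega)
  · exact two_crossers_sorted hw hwg2.1 hS hg1p (by omega) hl2p hwl1.2
      (by rw [e2]; omega) (by rw [e1]; omega) (by rw [e4]; omega) (by rw [e3]; omega)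

lemma cw_to_pattern (hw : MemSymm n w) (hin : i ≤ n) {α q β : ℕ} (hcw : CW w i α q β) :
    ∃ x1 x2 x3 : ℕ, 1 ≤ x1 ∧ x1 < x2 ∧ x2 < x3 ∧ x3 ≤ n ∧
      x1 ≤ i ∧ i < x3 ∧
      w x3 < w x2 ∧ w x2 < w x1 ∧ w x3 ≤ i ∧ i < w x1 := by
  obtain ⟨h1, h2, h3, h4, h5, h6, h7, h8⟩ := hcw
  have hβIcc : 1 ≤ β ∧ β ≤ n := by
    constructor
    · omega
    · by_contra h
      have : w⁻¹ β = β := ms_fix (ms_inv hw) (by omega)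
      omega
  have hα1 : 1 ≤ α := by
    by_contra h
    have h0 : w 0 = 0 := ms_fix hw (by omega)
    have h0' : w⁻¹ 0 = 0 := w.injective (by rw [w.apply_inv_self, h0])
    have hα : α = 0 := by omega
    rw [hα] at h6
    omega
  have hαIcc : 1 ≤ α ∧ α ≤ n := ⟨hα1, by omega⟩
  have hqIcc : 1 ≤ q ∧ q ≤ n := ⟨by omega, by omega⟩
  have hwβ := ms_inv_mem hw hβIcc
  have hwα := ms_inv_mem hw hαIcc
  refine ⟨w⁻¹ β, w⁻¹ q, w⁻¹ α, hwβ.1, h7, h8, hwα.2, h5, h6, ?_, ?_, ?_, ?_⟩ <;>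
    simp only [Equiv.Perm.apply_inv_self] <;> omega

end SuppRange


set_option maxHeartbeats 1600000 in
open SuppRange in
/-- support range: i appears exactly once in every reduced word of w iff
w has no straddling 321-pattern and no straddling 3412-pattern. -/
theorem support_range (n : ℕ) (w : Equiv.Perm ℕ) (hw : MemSymm n w) (i : ℕ)
    (hi : i ∈ supp n w) :
    (∀ s : List ℕ, IsReducedWord n w s → s.count i = 1) ↔
      (¬(∃ x1 x2 x3 : ℕ, 1 ≤ x1 ∧ x1 < x2 ∧ x2 < x3 ∧ x3 ≤ n ∧
           x1 ≤ i ∧ i < x3 ∧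
           w x3 < w x2 ∧ w x2 < w x1 ∧ w x3 ≤ i ∧ i < w x1) ∧
       ¬(∃ x1 x2 x3 x4 : ℕ, 1 ≤ x1 ∧ x1 < x2 ∧ x2 < x3 ∧ x3 < x4 ∧ x4 ≤ n ∧
           x2 ≤ i ∧ i < x3 ∧
           w x3 < w x4 ∧ w x4 < w x1 ∧ w x1 < w x2 ∧ w x4 ≤ i ∧ i < w x1)) := by

  classical
  obtain ⟨s0, hs0red, hi_mem⟩ := hi
  obtain ⟨⟨hs0let, hs0prod⟩, hs0min⟩ := hs0red
  have hib := hs0let i hi_mem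
  have hi1 : 1 ≤ i := hib.1
  have hi2 : i + 1 ≤ n := by omega
  have hin : i ≤ n := by omega
  have hminers : ∀ t, IsWord n w t → (invF n w).card ≤ t.length := by
    intro t ht
    have := card_invF_wordProd_le ht.1 1 ms_one
    rw [one_mul, ht.2, invF_one] at this
    simpa using this
  have hredlen : ∀ s, IsReducedWord n w s → s.length = (invF n w).card := by
    intro s hs
    have h1 := hminers s hs.1
    obtain ⟨t, htlet, htprod, htlen⟩ := chain_word (ms_one (n := n)) hw
      (by rw [invF_one]; exact Finset.empty_subset _)
    rw [one_mul] at htprod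
    have h2 := hs.2 t ⟨htlet, htprod⟩
    rw [invF_one] at htlen
    simp only [Finset.card_empty] at htlen
    omega
  have hcraw : (crossL w i).card = (crossR n w i).card := card_crossL_eq_crossR hw hin
  have hcnt : ∀ s, IsWord n w s → (crossL w i).card ≤ s.count i := by
    intro s hs
    rw [← hs.2]
    exact crossL_card_le_count s
  constructor
  · intro hall
    have hcnt0 : s0.count i = 1 := hall s0 ⟨⟨hs0let, hs0prod⟩, hs0min⟩
    have hcard1 : (crossL w i).card ≤ 1 := by
      have := hcnt s0 ⟨hs0let, hs0prod⟩
      omega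
    have huL : ∀ x x', x ≤ i → i < w⁻¹ x → x' ≤ i → i < w⁻¹ x' → x = x' := by
      intro x x' h1 h2 h3 h4
      by_contra hne
      have : 1 < (crossL w i).card := Finset.one_lt_card.mpr
        ⟨x, (mem_crossL_iff hw).mpr ⟨h1, h2⟩, x', (mem_crossL_iff hw).mpr ⟨h3, h4⟩, hne⟩
      omega
    have huR : ∀ y y', i < y → w⁻¹ y ≤ i → i < y' → w⁻¹ y' ≤ i → y = y' := by
      intro y y' h1 h2 h3 h4
      by_contra hne
      have : 1 < (crossR n w i).card := Finset.one_lt_card.mpr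
        ⟨y, (mem_crossR_iff hw).mpr ⟨h1, h2⟩, y', (mem_crossR_iff hw).mpr ⟨h3, h4⟩, hne⟩
      omega
    constructor
    · rintro ⟨x1, x2, x3, hb1, h12, h23, hb3, hxi1, hxi3, hv1, hv2, hv3, hv4⟩
      have hx1b : 1 ≤ x1 ∧ x1 ≤ n := ⟨hb1, by omega⟩
      have hx2b : 1 ≤ x2 ∧ x2 ≤ n := ⟨by omega, by omega⟩
      have hx3b : 1 ≤ x3 ∧ x3 ≤ n := ⟨by omega, hb3⟩
      have hwx1 := ms_apply_mem hw hx1b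
      have hwx2 := ms_apply_mem hw hx2b
      have hwx3 := ms_apply_mem hw hx3b
      have hiα : w⁻¹ (w x3) = x3 := w.inv_apply_self x3
      have hiβ : w⁻¹ (w x1) = x1 := w.inv_apply_self x1
      have hiq : w⁻¹ (w x2) = x2 := w.inv_apply_self x2
      have hLft : ∀ x, x ≤ i → x ≠ w x3 → w⁻¹ x ≤ i := by
        intro x hx hne
        by_contra h
        exact hne (huL x (w x3) hx (by omega) hv3 (by omega))
      have hRft : ∀ y, i < y → y ≠ w x1 → i < w⁻¹ y := by
        intro y hy hne
        by_contra h
        exact hne (huR y (w x1) hy (by omega) hv4 (by omega))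
      set W := (Finset.Icc 1 n).filter
        (fun z => w x3 < z ∧ z < w x1 ∧ w⁻¹ (w x1) < w⁻¹ z ∧ w⁻¹ z < w⁻¹ (w x3)) with hWdef
      have hq0 : w x2 ∈ W := by
        simp only [hWdef, Finset.mem_filter, Finset.mem_Icc]
        refine ⟨hwx2, hv1, hv2, ?_, ?_⟩
        · rw [hiβ, hiq]; omega
        · rw [hiα, hiq]; omega
      by_cases hexW : (W.filter (fun z => z ≤ i)).Nonempty
      · obtain ⟨q', hq'mem, hq'max⟩ :=
          Finset.exists_max_image (W.filter fun z => z ≤ i) (fun z => w⁻¹ z) hexW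
        rw [Finset.mem_filter] at hq'mem
        obtain ⟨hq'W, hq'i⟩ := hq'mem
        rw [hWdef, Finset.mem_filter, Finset.mem_Icc] at hq'W
        obtain ⟨⟨hq'1, hq'n⟩, hq'W1, hq'W2, hq'W3, hq'W4⟩ := hq'W
        have hmax : ∀ y, q' < y → y ≤ i → w⁻¹ y < w⁻¹ q' := by
          intro y hy1 hy2
          by_contra h
          have hlt : w⁻¹ q' < w⁻¹ y := by
            have : w⁻¹ y ≠ w⁻¹ q' := fun hh => (by omega : y ≠ q') (w⁻¹.injective hh)
            omega
          have hymem : y ∈ W.filter (fun z => z ≤ i) := by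
            rw [Finset.mem_filter, hWdef, Finset.mem_filter, Finset.mem_Icc]
            refine ⟨⟨⟨by omega, by omega⟩, by omega, by omega, by omega, ?_⟩, hy2⟩
            rw [hiα]
            have := hLft y hy2 (by omega)
            omega
          have := hq'max y hymem
          omega
        obtain ⟨s1, hl1, hpr1, hln1, hct1⟩ := planA hw hi1 hi2 hwx3.1 hv3
          (by rw [hiα]; omega) hv4 hwx1.2 (by rw [hiβ]; omega)
          hq'W1 hq'W2 hq'i hq'W3 hq'W4 hLft hRft hmax
        have := hall s1 ⟨⟨hl1, hpr1⟩, fun t ht => hln1 ▸ hminers t ht⟩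
        omega
      · have hWne : W.Nonempty := ⟨w x2, hq0⟩
        obtain ⟨q', hq'Wmem, hq'min⟩ := Finset.exists_min_image W (fun z => w⁻¹ z) hWne
        have hq'gt : i < q' := by
          by_contra h
          exact hexW ⟨q', Finset.mem_filter.mpr ⟨hq'Wmem, by omega⟩⟩
        rw [hWdef, Finset.mem_filter, Finset.mem_Icc] at hq'Wmem
        obtain ⟨⟨hq'1, hq'n⟩, hq'W1, hq'W2, hq'W3, hq'W4⟩ := hq'Wmem
        have hmin : ∀ y, i < y → y < q' → w⁻¹ q' < w⁻¹ y := by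
          intro y hy1 hy2
          by_contra h
          have hlt : w⁻¹ y < w⁻¹ q' := by
            have : w⁻¹ y ≠ w⁻¹ q' := fun hh => (by omega : y ≠ q') (w⁻¹.injective hh)
            omega
          have hymem : y ∈ W := by
            rw [hWdef, Finset.mem_filter, Finset.mem_Icc]
            refine ⟨⟨by omega, by omega⟩, by omega, by omega, ?_, by omega⟩
            rw [hiβ]
            have := hRft y hy1 (by omega)
            omega
          have := hq'min y hymem
          omega
        obtain ⟨s1, hl1, hpr1, hln1, hct1⟩ := planB hw hi1 hi2 hwx3.1 hv3
          (by rw [hiα]; omega) hv4 hwx1.2 (by rw [hiβ]; omega)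
          hq'W1 hq'W2 hq'gt hq'W3 hq'W4 hLft hRft hmin
        have := hall s1 ⟨⟨hl1, hpr1⟩, fun t ht => hln1 ▸ hminers t ht⟩
        omega
    · rintro ⟨x1, x2, x3, x4, hb1, h12, h23, h34, hb4, hxi2, hxi3, hv1, hv2, hv3, hv4, hv5⟩
      have hiβ1 : w⁻¹ (w x1) = x1 := w.inv_apply_self x1
      have hiβ2 : w⁻¹ (w x2) = x2 := w.inv_apply_self x2
      have : 1 < (crossR n w i).card := Finset.one_lt_card.mpr
        ⟨w x1, (mem_crossR_iff hw).mpr ⟨hv5, by rw [hiβ1]; omega⟩,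
         w x2, (mem_crossR_iff hw).mpr ⟨by omega, by rw [hiβ2]; omega⟩, by omega⟩
      omega
  · rintro ⟨h321, h3412⟩
    have hcL1 : (crossL w i).card ≤ 1 := by
      by_contra h
      obtain ⟨l1, hl1, l2, hl2, hll⟩ := Finset.one_lt_card.mp (show 1 < (crossL w i).card by omega)
      have hR2 : 1 < (crossR n w i).card := by omega
      obtain ⟨g1, hg1, g2, hg2, hgg⟩ := Finset.one_lt_card.mp hR2
      rcases two_crossers hw hin hl1 hl2 hll hg1 hg2 hgg with hp | hp
      · exact h321 hp
      · exact h3412 hp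
    have huL : ∀ x x', x ≤ i → i < w⁻¹ x → x' ≤ i → i < w⁻¹ x' → x = x' := by
      intro x x' h1 h2 h3 h4
      by_contra hne
      have : 1 < (crossL w i).card := Finset.one_lt_card.mpr
        ⟨x, (mem_crossL_iff hw).mpr ⟨h1, h2⟩, x', (mem_crossL_iff hw).mpr ⟨h3, h4⟩, hne⟩
      omega
    have huR : ∀ y y', i < y → w⁻¹ y ≤ i → i < y' → w⁻¹ y' ≤ i → y = y' := by
      intro y y' h1 h2 h3 h4
      by_contra hne
      have : 1 < (crossR n w i).card := Finset.one_lt_card.mpr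
        ⟨y, (mem_crossR_iff hw).mpr ⟨h1, h2⟩, y', (mem_crossR_iff hw).mpr ⟨h3, h4⟩, hne⟩
      omega
    have hexR : ∀ x, x ≤ i → i < w⁻¹ x → ∃ y, i < y ∧ w⁻¹ y ≤ i := by
      intro x h1 h2
      have hx : 0 < (crossL w i).card :=
        Finset.card_pos.mpr ⟨x, (mem_crossL_iff hw).mpr ⟨h1, h2⟩⟩
      rw [hcraw] at hx
      obtain ⟨y, hy⟩ := Finset.card_pos.mp hx
      obtain ⟨hy1, hy2⟩ := (mem_crossR_iff hw).mp hy
      exact ⟨y, hy1, hy2⟩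
    have hexL : ∀ y, i < y → w⁻¹ y ≤ i → ∃ x, x ≤ i ∧ i < w⁻¹ x := by
      intro y h1 h2
      have hx : 0 < (crossR n w i).card :=
        Finset.card_pos.mpr ⟨y, (mem_crossR_iff hw).mpr ⟨h1, h2⟩⟩
      rw [← hcraw] at hx
      obtain ⟨x, hxm⟩ := Finset.card_pos.mp hx
      obtain ⟨hxa, hxb⟩ := (mem_crossL_iff hw).mp hxm
      exact ⟨x, hxa, hxb⟩
    have hnw : ¬∃ α q β, CW w i α q β := by
      rintro ⟨α, q, β, hcw⟩
      exact h321 (cw_to_pattern hw hin hcw)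
    have hle1 : ∀ s', IsReducedWord n w s' → s'.count i ≤ 1 := by
      intro s' hred'
      by_contra hc
      have h2 : 2 ≤ s'.count i := by omega
      have hmem : i ∈ s' := by
        by_contra hmm
        rw [List.count_eq_zero.mpr hmm] at h2
        omega
      obtain ⟨p, r0, hdec0, hp⟩ := exists_first_split hmem
      have hsum0 : s'.count i = p.count i + (r0.count i + 1) := by
        rw [hdec0]; simp [List.count_append]
      have hzero : p.count i = 0 := List.count_eq_zero.mpr hp
      have : i ∈ r0 := by
        by_contra hmm
        rw [List.count_eq_zero.mpr hmm] at hsum0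
        omega
      obtain ⟨p', r, hdec1, hp'⟩ := exists_first_split this
      have hdec : s' = p ++ i :: (p' ++ i :: r) := by rw [hdec0, hdec1]
      exact lemA hred'.1.1 hred'.1.2 (hredlen s' hred') hdec hp hp' hi1 hi2
        huL huR hexR hexL hnw
    intro s hsred
    have hle := hle1 s hsred
    obtain ⟨p, r, hdec0, hp⟩ := exists_first_split hi_mem
    have hs0cnt : s0.count i = 1 := by
      have h1 : 1 ≤ s0.count i := by
        by_contra h
        exact (List.count_eq_zero.mp (by omega)) hi_mem
      have h2 := hle1 s0 ⟨⟨hs0let, hs0prod⟩, hs0min⟩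
      omega
    have hpr : i ∉ r := by
      intro hmm
      have h1 : 1 ≤ r.count i := by
        by_contra h
        exact (List.count_eq_zero.mp (by omega)) hmm
      have hsum0 : s0.count i = p.count i + (r.count i + 1) := by
        rw [hdec0]; simp [List.count_append]
      omega
    have hplet : ∀ m ∈ p, 1 ≤ m ∧ m ≤ n - 1 := fun m hm =>
      hs0let m (by rw [hdec0]; simp [hm])
    have hup : MemSymm n (wordProd p) := ms_wordProd hplet
    set b := (wordProd p) (i + 1) with hbdef
    have hbb : 1 ≤ b ∧ b ≤ n := ms_apply_mem hup ⟨by omega, hi2⟩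
    have hbgt : i < b := by
      by_contra h
      have := (noI_preserve hp b).mpr (by omega)
      rw [hbdef, (wordProd p).inv_apply_self (i+1)] at this
      omega
    have hwb : w⁻¹ b ≤ i := by
      have hweq : w = (wordProd p * sigmaT i) * wordProd r := by
        rw [← hs0prod, hdec0, wordProd_append, wordProd_cons, mul_assoc]
      rw [hweq, mul_inv_rev, Equiv.Perm.mul_apply, noI_preserve hpr,
        mul_inv_rev, Equiv.Perm.mul_apply, sigmaT_inv, hbdef,
        (wordProd p).inv_apply_self (i + 1)]
      simp [sigmaT, Equiv.swap_apply_right]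
    have hLpos : 1 ≤ (crossL w i).card := by
      rw [hcraw]
      exact Finset.card_pos.mpr ⟨b, (mem_crossR_iff hw).mpr ⟨hbgt, hwb⟩⟩
    have := hcnt s hsred.1
    omega
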